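/- arXiv:2011.08643 — 4 statements merged into one kernel-verified Lean document; each statement's English description precedes it below -/
import Mathlib

section
/- A set B ⊆ ℤ is the beta-set of some (necessarily unique) partition if and only if ℕ₀ ∩ B and (−ℕ) \ B are finite sets of the same cardinality. -/
/-- A partition, given as a weakly decreasing finitely-supported sequence of
natural numbers (`parts 0` is the first part). -/
structure SeqPartition where
  parts : ℕ →₀ ℕ
  antitone : ∀ ⦃i j : ℕ⦄, i ≤ j → parts j ≤ parts i

namespace SeqPartition

/-- The size `|λ|` of a partition. -/
def size (l : SeqPartition) : ℕ := l.parts.sum fun _ v => v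

/-- The beta-set `β(λ) = { λ_r − r : r ≥ 1 }` (here 0-indexed). -/
def betaSet (l : SeqPartition) : Set ℤ :=
  Set.range fun r : ℕ => (l.parts r : ℤ) - (r + 1)

/-- `RemoveHook h l m` : `m` is obtained from `l` by removing a rim `h`-hook;
in beta-set terms, an element `b` of `β(l)` is replaced by `b − h ∉ β(l)`. -/
def RemoveHook (h : ℕ) (l m : SeqPartition) : Prop :=
  ∃ b : ℤ, b ∈ l.betaSet ∧ b - (h : ℤ) ∉ l.betaSet ∧
    m.betaSet = insert (b - (h : ℤ)) (l.betaSet \ {b})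

/-- `l` is an `s`-core: no rim `s`-hook can be removed. -/
def IsCore (s : ℕ) (l : SeqPartition) : Prop := ∀ m : SeqPartition, ¬ RemoveHook s l m

/-- `c` is the `s`-core of `l`: it is obtained from `l` by repeatedly removing
rim `s`-hooks, and is itself an `s`-core. -/
def HasCore (s : ℕ) (l c : SeqPartition) : Prop :=
  Relation.ReflTransGen (RemoveHook s) l c ∧ IsCore s c

/-- `IsConj l m` : `m` is the conjugate partition of `l`. -/
def IsConj (l m : SeqPartition) : Prop :=
  ∀ r : ℕ, m.parts r = Set.ncard {c : ℕ | r + 1 ≤ l.parts c}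

end SeqPartition

/-- The region `U_x = { x + as + bt : a, b > 0 }`. -/
def UpSet (s t : ℕ) (x : ℤ) : Set ℤ :=
  {n : ℤ | ∃ a b : ℕ, 0 < a ∧ 0 < b ∧ n = x + (a : ℤ) * s + (b : ℤ) * t}

/-- The region `L_x = { x − as − bt : a, b ≥ 0 }`. -/
def LowSet (s t : ℕ) (x : ℤ) : Set ℤ :=
  {n : ℤ | ∃ a b : ℕ, n = x - (a : ℤ) * s - (b : ℤ) * t}

/-- `x` is a pinch-point for `l` : `L_x ⊆ β(l)` and `β(l) ∩ U_x = ∅`. -/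
def PinchPoint (s t : ℕ) (x : ℤ) (l : SeqPartition) : Prop :=
  LowSet s t x ⊆ l.betaSet ∧ l.betaSet ∩ UpSet s t x = ∅

/-- The generator `w_i` of the affine symmetric group `W_s` in its level-`t`
action on `ℤ` : `n ↦ n + t` if `n ≡ (i−1)t − (s−1)(t−1)/2 (mod s)`,
`n ↦ n − t` if `n ≡ it − (s−1)(t−1)/2 (mod s)`, and `n ↦ n` otherwise. -/
def wgen (s t : ℕ) (i : ℤ) : ℤ → ℤ := fun n =>
  if (s : ℤ) ∣ (n + ((s : ℤ) - 1) * ((t : ℤ) - 1) / 2 - (i - 1) * t) then n + t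
  else if (s : ℤ) ∣ (n + ((s : ℤ) - 1) * ((t : ℤ) - 1) / 2 - i * t) then n - t
  else n

/-- The monoid of maps `ℤ → ℤ` generated by the `wgen s t i`.  Since each
generator is an involution, this is the image of the level-`t` action
of the affine symmetric group `W_s` on `ℤ`. -/
def WMon (s t : ℕ) : Submonoid (Function.End ℤ) :=
  Submonoid.closure {f | ∃ i : ℤ, f = wgen s t i}

/-- `l` is `(s,t)`-minimal: no partition of smaller size has the same
`s`-core and `t`-core. -/
def MinimalPart (s t : ℕ) (l : SeqPartition) : Prop :=
  ∀ (m σ τ : SeqPartition), SeqPartition.HasCore s l σ → SeqPartition.HasCore t l τ →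
    SeqPartition.HasCore s m σ → SeqPartition.HasCore t m τ → l.size ≤ m.size


open Set

private lemma sa_key {f g : ℕ → ℤ} (hf : StrictAnti f) (hg : StrictAnti g)
    (h : Set.range f = Set.range g) (n : ℕ) (ih : ∀ k < n, f k = g k) : f n ≤ g n := by
  obtain ⟨m, hm⟩ : f n ∈ Set.range g := h ▸ Set.mem_range_self n
  rcases lt_trichotomy m n with hmn | hmn | hmn
  · have e2 : f m = g m := ih m hmn
    have e3 : f n < f m := hf hmn
    omega
  · subst hmn; omega
  · have : g m < g n := hg hmn
    omega

/-- Two strictly antitone sequences of integers with the same range are equal. -/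
lemma strictAnti_range_eq {f g : ℕ → ℤ} (hf : StrictAnti f) (hg : StrictAnti g)
    (h : Set.range f = Set.range g) : f = g := by
  funext n
  induction n using Nat.strong_induction_on with
  | _ n ih =>
    have h1 := sa_key hf hg h n ih
    have h2 := sa_key hg hf h.symm n (fun k hk => (ih k hk).symm)
    omega

/-- The strictly decreasing enumeration of `B`. -/
noncomputable def benum (B : Set ℤ) : ℕ → ℤ
  | 0 => sSup B
  | n + 1 => sSup (B ∩ Set.Iio (benum B n))

section benum

variable {B : Set ℤ}

lemma bddAbove_of_finite_nonneg (h1 : (B ∩ {b : ℤ | 0 ≤ b}).Finite) : BddAbove B := by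
  have hsub : B ⊆ (B ∩ {b : ℤ | 0 ≤ b}) ∪ Set.Iio 0 := by
    intro x hx
    by_cases h : 0 ≤ x
    · exact Or.inl ⟨hx, h⟩
    · exact Or.inr (by simpa using h)
  exact (h1.bddAbove.union bddAbove_Iio).mono hsub

lemma nonempty_inter_Iio (h2 : ({b : ℤ | b < 0} \ B).Finite) (x : ℤ) :
    (B ∩ Set.Iio x).Nonempty := by
  have hinf : (Set.Iio (min x 0)).Infinite := Set.Iio_infinite _
  obtain ⟨z, hz1, hz2⟩ := (hinf.diff h2).nonempty
  have hz1' : z < min x 0 := hz1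
  refine ⟨z, ?_, ?_⟩
  · by_contra hzB
    exact hz2 ⟨show z < 0 from lt_of_lt_of_le hz1' (min_le_right _ _), hzB⟩
  · exact Set.mem_Iio.mpr (lt_of_lt_of_le hz1' (min_le_left _ _))

variable (h1 : (B ∩ {b : ℤ | 0 ≤ b}).Finite) (h2 : ({b : ℤ | b < 0} \ B).Finite)
include h1 h2

lemma benum_succ_mem (n : ℕ) : benum B (n + 1) ∈ B ∩ Set.Iio (benum B n) := by
  have : benum B (n + 1) = sSup (B ∩ Set.Iio (benum B n)) := rfl
  rw [this]
  exact Int.csSup_mem (nonempty_inter_Iio h2 _)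
    ((bddAbove_of_finite_nonneg h1).mono Set.inter_subset_left)

lemma benum_mem (n : ℕ) : benum B n ∈ B := by
  cases n with
  | zero =>
    have : benum B 0 = sSup B := rfl
    rw [this]
    exact Int.csSup_mem ⟨_, ((nonempty_inter_Iio h2 0).choose_spec).1⟩
      (bddAbove_of_finite_nonneg h1)
  | succ n => exact (benum_succ_mem h1 h2 n).1

lemma benum_strictAnti : StrictAnti (benum B) :=
  strictAnti_nat_of_succ_lt fun n => Set.mem_Iio.mp (benum_succ_mem h1 h2 n).2

lemma benum_range : Set.range (benum B) = B := by
  apply Set.Subset.antisymm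
  · rintro _ ⟨n, rfl⟩; exact benum_mem h1 h2 n
  · intro b hb
    by_contra hnb
    have hne : ∀ n, benum B n ≠ b := fun n hn => hnb ⟨n, hn⟩
    have hle : ∀ n, b ≤ benum B n := by
      intro n
      induction n with
      | zero => exact le_csSup (bddAbove_of_finite_nonneg h1) hb
      | succ n ih =>
        have hlt : b < benum B n := lt_of_le_of_ne ih (fun h => hne n h.symm)
        exact le_csSup ((bddAbove_of_finite_nonneg h1).mono Set.inter_subset_left) ⟨hb, hlt⟩
    have hdec : ∀ n : ℕ, benum B n ≤ benum B 0 - n := by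
      intro n
      induction n with
      | zero => simp
      | succ n ih =>
        have := Set.mem_Iio.mp (benum_succ_mem h1 h2 n).2
        push_cast
        omega
    obtain ⟨n, hn⟩ : ∃ n : ℕ, benum B 0 - n < b := by
      refine ⟨(benum B 0 - b + 1).toNat, ?_⟩
      omega
    exact absurd (hle n) (not_le.mpr (lt_of_le_of_lt (hdec n) hn))

lemma benum_inter_Ioi (n : ℕ) :
    B ∩ Set.Ioi (benum B n) = benum B '' Set.Iio n := by
  apply Set.Subset.antisymm
  · rintro b ⟨hbB, hbn⟩
    obtain ⟨m, rfl⟩ : b ∈ Set.range (benum B) := (benum_range h1 h2).symm ▸ hbB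
    exact ⟨m, (benum_strictAnti h1 h2).lt_iff_gt.mp hbn, rfl⟩
  · rintro _ ⟨m, hm, rfl⟩
    exact ⟨benum_mem h1 h2 m, (benum_strictAnti h1 h2) hm⟩

lemma benum_ncard_inter_Ioi (n : ℕ) : (B ∩ Set.Ioi (benum B n)).ncard = n := by
  rw [benum_inter_Ioi h1 h2,
    Set.ncard_image_of_injective _ (benum_strictAnti h1 h2).injective,
    ← Finset.coe_Iio, Set.ncard_coe_finset, Nat.card_Iio]

lemma benum_le (n : ℕ) : benum B n ≤ benum B 0 - n := by
  induction n with
  | zero => simp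
  | succ n ih =>
    have := Set.mem_Iio.mp (benum_succ_mem h1 h2 n).2
    push_cast
    omega


lemma benum_count (n : ℕ) (hx : benum B n < 0) :
    (n : ℤ) + ((Set.Ioo (benum B n) 0 \ B).ncard : ℤ)
      = ((B ∩ {b : ℤ | 0 ≤ b}).ncard : ℤ) + (-(benum B n) - 1) := by
  set x := benum B n with hxdef
  have split1 : B ∩ Set.Ioi x = (B ∩ {b : ℤ | 0 ≤ b}) ∪ (B ∩ Set.Ioo x 0) := by
    ext z
    simp only [mem_inter_iff, mem_Ioi, mem_union, mem_setOf_eq, mem_Ioo]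
    constructor
    · rintro ⟨h, hz⟩
      by_cases h0 : 0 ≤ z
      · exact Or.inl ⟨h, h0⟩
      · exact Or.inr ⟨h, hz, by omega⟩
    · rintro (⟨h, hz⟩ | ⟨h, hz1, hz2⟩)
      · exact ⟨h, by omega⟩
      · exact ⟨h, hz1⟩
  have hdisj : Disjoint (B ∩ {b : ℤ | 0 ≤ b}) (B ∩ Set.Ioo x 0) := by
    rw [Set.disjoint_left]
    rintro z ⟨-, hz1⟩ ⟨-, -, hz2⟩
    exact absurd hz1 (by simpa using not_le.mpr hz2)
  have hfin2' : (B ∩ Set.Ioo x 0).Finite := (Set.finite_Ioo x 0).subset inter_subset_right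
  have c1 : n = (B ∩ {b : ℤ | 0 ≤ b}).ncard + (B ∩ Set.Ioo x 0).ncard := by
    rw [← benum_ncard_inter_Ioi h1 h2 n, ← hxdef, split1,
      Set.ncard_union_eq hdisj h1 hfin2']
  have split2 : Set.Ioo x 0 = (B ∩ Set.Ioo x 0) ∪ (Set.Ioo x 0 \ B) := by
    ext z
    simp only [mem_inter_iff, mem_union, mem_diff, mem_Ioo]
    tauto
  have hdisj2 : Disjoint (B ∩ Set.Ioo x 0) (Set.Ioo x 0 \ B) := by
    rw [Set.disjoint_left]
    rintro z ⟨hz, -⟩ ⟨-, hz2⟩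
    exact hz2 hz
  have c2 : (Set.Ioo x 0).ncard = (B ∩ Set.Ioo x 0).ncard + (Set.Ioo x 0 \ B).ncard := by
    conv_lhs => rw [split2]
    rw [Set.ncard_union_eq hdisj2 hfin2' ((Set.finite_Ioo x 0).diff)]
  have c3 : ((Set.Ioo x 0).ncard : ℤ) = -x - 1 := by
    rw [← Finset.coe_Ioo, Set.ncard_coe_finset, Int.card_Ioo]
    omega
  omega

lemma benum_ge (hcard : (B ∩ {b : ℤ | 0 ≤ b}).ncard = ({b : ℤ | b < 0} \ B).ncard)
    (n : ℕ) : -(n : ℤ) - 1 ≤ benum B n := by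
  by_cases hx : benum B n < 0
  · have key := benum_count h1 h2 n hx
    have hsub : Set.Ioo (benum B n) 0 \ B ⊆ {b : ℤ | b < 0} \ B := by
      rintro z ⟨⟨-, hz⟩, hzB⟩
      exact ⟨hz, hzB⟩
    have hle : (Set.Ioo (benum B n) 0 \ B).ncard ≤ ({b : ℤ | b < 0} \ B).ncard :=
      Set.ncard_le_ncard hsub h2
    omega
  · omega

lemma benum_eventually
    (hcard : (B ∩ {b : ℤ | 0 ≤ b}).ncard = ({b : ℤ | b < 0} \ B).ncard) :
    ∃ N : ℕ, ∀ n : ℕ, N ≤ n → benum B n = -(n : ℤ) - 1 := by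
  obtain ⟨c, hc⟩ : BddBelow ({b : ℤ | b < 0} \ B) := h2.bddBelow
  refine ⟨(benum B 0 - min c 0 + 1).toNat, fun n hn => ?_⟩
  have hn' : benum B 0 - min c 0 + 1 ≤ (n : ℤ) := by
    have := Int.self_le_toNat (benum B 0 - min c 0 + 1)
    exact le_trans this (by exact_mod_cast hn)
  have hxsmall : benum B n ≤ min c 0 - 1 := by
    have := benum_le h1 h2 n
    omega
  have hx : benum B n < 0 := by omega
  have key := benum_count h1 h2 n hx
  have hset : Set.Ioo (benum B n) 0 \ B = {b : ℤ | b < 0} \ B := by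
    ext z
    simp only [mem_diff, mem_Ioo, mem_setOf_eq]
    constructor
    · rintro ⟨⟨-, hz⟩, hzB⟩; exact ⟨hz, hzB⟩
    · rintro ⟨hz, hzB⟩
      have : c ≤ z := hc ⟨hz, hzB⟩
      exact ⟨⟨by omega, hz⟩, hzB⟩
  rw [hset] at key
  omega


end benum

section mainproof

open Set

namespace SeqPartition

/-- The beta-sequence of a partition. -/
def bseq (l : SeqPartition) : ℕ → ℤ := fun r : ℕ => (l.parts r : ℤ) - (r + 1)

lemma betaSet_eq_range (l : SeqPartition) : l.betaSet = Set.range l.bseq := rfl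

lemma bseq_strictAnti (l : SeqPartition) : StrictAnti l.bseq := by
  apply strictAnti_nat_of_succ_lt
  intro n
  have := l.antitone (show n ≤ n + 1 by omega)
  simp only [bseq]
  push_cast
  omega

lemma ext' {l m : SeqPartition} (h : l.parts = m.parts) : l = m := by
  cases l; cases m; cases h; rfl

lemma betaSet_injective {l m : SeqPartition} (h : l.betaSet = m.betaSet) : l = m := by
  have hb : l.bseq = m.bseq :=
    strictAnti_range_eq l.bseq_strictAnti m.bseq_strictAnti
      (by rw [← betaSet_eq_range, ← betaSet_eq_range, h])
  apply ext'
  ext r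
  have := congrFun hb r
  simp only [bseq] at this
  omega

end SeqPartition

/-- Forward direction of stmt1. -/
lemma forward_dir (l : SeqPartition) :
    ((l.betaSet ∩ {b : ℤ | 0 ≤ b}).Finite ∧ ({b : ℤ | b < 0} \ l.betaSet).Finite ∧
      (l.betaSet ∩ {b : ℤ | 0 ≤ b}).ncard = ({b : ℤ | b < 0} \ l.betaSet).ncard) := by
  set B := l.betaSet with hB
  set f := l.bseq with hf
  have hrange : Set.range f = B := (l.betaSet_eq_range).symm
  obtain ⟨N, hNgt⟩ : ∃ N : ℕ, ∀ r ∈ l.parts.support, r < N :=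
    ⟨l.parts.support.sup id + 1, fun r hr => Nat.lt_succ_of_le (Finset.le_sup (f := id) hr)⟩
  have hN : ∀ r : ℕ, N ≤ r → l.parts r = 0 := by
    intro r hr
    by_contra h
    have hmem := Finsupp.mem_support_iff.mpr h
    have := hNgt r hmem
    omega
  have hfN : ∀ r : ℕ, N ≤ r → f r = -(r : ℤ) - 1 := by
    intro r hr
    simp only [hf, SeqPartition.bseq, hN r hr]
    push_cast
    ring
  have hfge : ∀ r : ℕ, -(r : ℤ) - 1 ≤ f r := by
    intro r
    simp only [hf, SeqPartition.bseq]
    have : (0 : ℤ) ≤ l.parts r := Int.natCast_nonneg _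
    omega
  have hIci : B ∩ Set.Ici (-(N : ℤ)) = f '' Set.Iio N := by
    apply Set.Subset.antisymm
    · rintro b ⟨hbB, hb⟩
      obtain ⟨r, rfl⟩ : b ∈ Set.range f := hrange ▸ hbB
      refine ⟨r, ?_, rfl⟩
      by_contra hr
      rw [Set.mem_Iio, not_lt] at hr
      have := hfN r hr
      simp only [Set.mem_Ici] at hb
      omega
    · rintro _ ⟨r, hr, rfl⟩
      refine ⟨hrange ▸ Set.mem_range_self r, ?_⟩
      have := hfge r
      simp only [Set.mem_Iio] at hr
      simp only [Set.mem_Ici]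
      omega
  have hfinIci : (B ∩ Set.Ici (-(N : ℤ))).Finite := by
    rw [hIci]; exact (Set.finite_Iio N).image f
  have hcard1 : (B ∩ Set.Ici (-(N : ℤ))).ncard = N := by
    rw [hIci, Set.ncard_image_of_injective _ l.bseq_strictAnti.injective,
      ← Finset.coe_Iio, Set.ncard_coe_finset, Nat.card_Iio]
  have hsub1 : B ∩ {b : ℤ | 0 ≤ b} ⊆ B ∩ Set.Ici (-(N : ℤ)) := by
    rintro z ⟨hz, h0⟩
    exact ⟨hz, by simp only [Set.mem_Ici]; simp only [Set.mem_setOf_eq] at h0; omega⟩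
  have hfin1 : (B ∩ {b : ℤ | 0 ≤ b}).Finite := hfinIci.subset hsub1
  have hnegsub : {b : ℤ | b < 0} \ B ⊆ Set.Ico (-(N : ℤ)) 0 := by
    rintro z ⟨hz, hzB⟩
    simp only [Set.mem_setOf_eq] at hz
    simp only [Set.mem_Ico]
    refine ⟨?_, hz⟩
    by_contra h
    push_neg at h
    set m := (-z - 1).toNat with hm
    have hmz : (m : ℤ) = -z - 1 := by omega
    have hmN : N ≤ m := by omega
    have : f m = z := by rw [hfN m hmN]; omega
    exact hzB (hrange ▸ ⟨m, this⟩)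
  have hfin2 : ({b : ℤ | b < 0} \ B).Finite := (Set.finite_Ico _ _).subset hnegsub
  -- now cardinalities
  have splitIci : B ∩ Set.Ici (-(N : ℤ)) =
      (B ∩ {b : ℤ | 0 ≤ b}) ∪ (B ∩ Set.Ico (-(N : ℤ)) 0) := by
    ext z
    simp only [Set.mem_inter_iff, Set.mem_Ici, Set.mem_union, Set.mem_setOf_eq, Set.mem_Ico]
    constructor
    · rintro ⟨h, hz⟩
      by_cases h0 : 0 ≤ z
      · exact Or.inl ⟨h, h0⟩
      · exact Or.inr ⟨h, hz, by omega⟩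
    · rintro (⟨h, hz⟩ | ⟨h, hz1, hz2⟩) <;> exact ⟨‹z ∈ B›, by omega⟩
  have hdisj : Disjoint (B ∩ {b : ℤ | 0 ≤ b}) (B ∩ Set.Ico (-(N : ℤ)) 0) := by
    rw [Set.disjoint_left]
    rintro z ⟨-, hz1⟩ ⟨-, -, hz2⟩
    simp only [Set.mem_setOf_eq] at hz1
    omega
  have hfinIco : (B ∩ Set.Ico (-(N : ℤ)) 0).Finite :=
    (Set.finite_Ico _ _).subset inter_subset_right
  have e1 : (B ∩ Set.Ici (-(N : ℤ))).ncard
      = (B ∩ {b : ℤ | 0 ≤ b}).ncard + (B ∩ Set.Ico (-(N : ℤ)) 0).ncard := by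
    conv_lhs => rw [splitIci]
    rw [Set.ncard_union_eq hdisj hfin1 hfinIco]
  have splitIco : Set.Ico (-(N : ℤ)) 0 =
      (B ∩ Set.Ico (-(N : ℤ)) 0) ∪ ({b : ℤ | b < 0} \ B) := by
    apply Set.Subset.antisymm
    · intro z hz
      by_cases hzB : z ∈ B
      · exact Or.inl ⟨hzB, hz⟩
      · exact Or.inr ⟨by simpa using hz.2, hzB⟩
    · rintro z (⟨hzB, hz⟩ | hz)
      · exact hz
      · exact hnegsub hz
  have hdisj2 : Disjoint (B ∩ Set.Ico (-(N : ℤ)) 0) ({b : ℤ | b < 0} \ B) := by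
    rw [Set.disjoint_left]
    rintro z ⟨hzB, -⟩ ⟨-, hz2⟩
    exact hz2 hzB
  have hIcoCard : (Set.Ico (-(N : ℤ)) 0).ncard = N := by
    rw [← Finset.coe_Ico, Set.ncard_coe_finset, Int.card_Ico]
    omega
  have e2 : (Set.Ico (-(N : ℤ)) 0).ncard
      = (B ∩ Set.Ico (-(N : ℤ)) 0).ncard + ({b : ℤ | b < 0} \ B).ncard := by
    conv_lhs => rw [splitIco]
    rw [Set.ncard_union_eq hdisj2 hfinIco hfin2]
  exact ⟨hfin1, hfin2, by omega⟩

end mainproof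

/-- characterisation of beta-sets. -/
theorem stmt1 (B : Set ℤ) :
    (∃! l : SeqPartition, l.betaSet = B) ↔
      ((B ∩ {b : ℤ | 0 ≤ b}).Finite ∧ ({b : ℤ | b < 0} \ B).Finite ∧
        (B ∩ {b : ℤ | 0 ≤ b}).ncard = ({b : ℤ | b < 0} \ B).ncard) := by
  constructor
  · rintro ⟨l, rfl, -⟩
    exact forward_dir l
  · rintro ⟨h1, h2, hcard⟩
    obtain ⟨N, hN⟩ := benum_eventually h1 h2 hcard
    have hge : ∀ n : ℕ, (0 : ℤ) ≤ benum B n + n + 1 := by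
      intro n
      have := benum_ge h1 h2 hcard n
      omega
    have hmono : ∀ n : ℕ, benum B (n + 1) + (n + 1) ≤ benum B n + n := by
      intro n
      have := Set.mem_Iio.mp (benum_succ_mem h1 h2 n).2
      omega
    set g : ℕ → ℕ := fun n => (benum B n + n + 1).toNat with hg
    have hsupp : ∀ n : ℕ, g n ≠ 0 → n ∈ Finset.range N := by
      intro n hn
      rw [Finset.mem_range]
      by_contra h
      push_neg at h
      have := hN n h
      simp only [hg] at hn
      omega
    set p : ℕ →₀ ℕ := Finsupp.onFinset (Finset.range N) g hsupp with hp
    have hpval : ∀ n : ℕ, ((p n : ℤ)) = benum B n + n + 1 := by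
      intro n
      have := hge n
      simp only [hp, Finsupp.onFinset_apply, hg]
      omega
    have hanti : ∀ ⦃i j : ℕ⦄, i ≤ j → p j ≤ p i := by
      intro i j hij
      have key : ∀ k : ℕ, benum B k + k + 1 ≤ benum B i + i + 1 → i ≤ k →
          True := fun _ _ _ => trivial
      have hmono' : Antitone (fun n : ℕ => benum B n + n) :=
        antitone_nat_of_succ_le fun n => by have := hmono n; push_cast; omega
      have := hmono' hij
      have h1' := hpval i
      have h2' := hpval j
      simp only at this
      omega
    refine ⟨⟨p, hanti⟩, ?_, ?_⟩
    · show SeqPartition.betaSet _ = B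
      rw [SeqPartition.betaSet]
      have : (fun r : ℕ => ((⟨p, hanti⟩ : SeqPartition).parts r : ℤ) - (r + 1)) = benum B := by
        funext r
        show (p r : ℤ) - (r + 1) = benum B r
        have := hpval r
        omega
      rw [this, benum_range h1 h2]
    · intro m hm
      apply SeqPartition.betaSet_injective
      rw [hm]
      show B = SeqPartition.betaSet _
      rw [SeqPartition.betaSet]
      have : (fun r : ℕ => ((⟨p, hanti⟩ : SeqPartition).parts r : ℤ) - (r + 1)) = benum B := by
        funext r
        show (p r : ℤ) - (r + 1) = benum B r
        have := hpval r
        omega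
      rw [this, benum_range h1 h2]
end

section
/- For any partition λ, the beta-set of the conjugate partition satisfies β(λ') = ℤ \ { −1 − b : b ∈ β(λ) }. -/
/-- conjugate symmetry -/
lemma conj_symm (l m : SeqPartition) (h : SeqPartition.IsConj l m) (r c : ℕ) :
    r + 1 ≤ l.parts c ↔ c + 1 ≤ m.parts r := by
  have hfin : {c : ℕ | r + 1 ≤ l.parts c}.Finite := by
    apply Set.Finite.subset l.parts.finite_support
    intro c hc
    have hc' : r + 1 ≤ l.parts c := hc
    simp only [Function.mem_support]
    omega
  rw [h r]
  constructor
  · intro hc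
    have hsub : Set.Iic c ⊆ {c' : ℕ | r + 1 ≤ l.parts c'} := fun c' hc' =>
      le_trans hc (l.antitone hc')
    have := Set.ncard_le_ncard hsub hfin
    have hiic : (Set.Iic c).ncard = c + 1 := by rw [Set.ncard_eq_toFinset_card']; simp
    omega
  · intro hc
    by_contra hne
    have hsub : {c' : ℕ | r + 1 ≤ l.parts c'} ⊆ Set.Iio c := by
      intro c' hc'
      simp only [Set.mem_setOf_eq] at hc'
      simp only [Set.mem_Iio]
      by_contra hle
      exact hne (le_trans hc' (l.antitone (not_lt.mp hle)))
    have := Set.ncard_le_ncard hsub (Set.finite_Iio c)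
    have hiio : (Set.Iio c).ncard = c := by rw [Set.ncard_eq_toFinset_card']; simp
    omega



/-- the beta-set of the conjugate partition. -/
theorem stmt2 (l m : SeqPartition) (h : SeqPartition.IsConj l m) :
    m.betaSet = Set.univ \ ((fun b : ℤ => -1 - b) '' l.betaSet) := by
  ext n
  simp only [SeqPartition.betaSet, Set.mem_range, Set.mem_diff, Set.mem_univ, Set.mem_image,
    true_and, not_exists]
  constructor
  · rintro ⟨c, rfl⟩ x ⟨⟨r, rfl⟩, hbad⟩
    by_cases hc : r + 1 ≤ m.parts c
    · have h1 : c + 1 ≤ l.parts r := (conj_symm l m h c r).mpr hc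
      omega
    · have h2 : ¬ (c + 1 ≤ l.parts r) := fun hh => hc ((conj_symm l m h c r).mp hh)
      omega
  · intro hn
    have h2 : ∀ r : ℕ, (r : ℤ) - l.parts r ≠ n := by
      intro r hr
      exact hn ((l.parts r : ℤ) - (r + 1)) ⟨⟨r, rfl⟩, by omega⟩
    by_cases hcase : n < -(l.parts 0 : ℤ)
    · refine ⟨(-n - 1).toNat, ?_⟩
      have hc : ((-n - 1).toNat : ℤ) = -n - 1 := Int.toNat_of_nonneg (by omega)
      have : ¬ ((-n-1).toNat + 1 ≤ l.parts 0) := by omega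
      have hm : ¬ (0 + 1 ≤ m.parts ((-n-1).toNat)) := fun hh =>
        this ((conj_symm l m h ((-n-1).toNat) 0).mpr hh)
      have hm0 : m.parts ((-n-1).toNat) = 0 := by omega
      rw [hm0]; push_cast; omega
    · push_neg at hcase
      have hd0 : ((0:ℕ):ℤ) - l.parts 0 < n := by
        have := h2 0; push_cast at this ⊢; omega
      set P : ℕ → Prop := fun k => (k : ℤ) - l.parts k < n with hP
      have hdec : DecidablePred P := fun k => by unfold P; infer_instance
      set B : ℕ := (n + l.parts 0).toNat with hB
      have hBn : (B : ℤ) = n + l.parts 0 := Int.toNat_of_nonneg (by omega)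
      set k : ℕ := Nat.findGreatest P B with hk
      have hk0 : P 0 := hd0
      have hkP : P k := Nat.findGreatest_spec (Nat.zero_le B) hk0
      have hmono : ∀ j : ℕ, (l.parts j : ℤ) ≤ l.parts 0 := fun j => by
        exact_mod_cast l.antitone (Nat.zero_le j)
      have hnext : ¬ P (k + 1) := by
        by_cases hkB : k + 1 ≤ B
        · exact Nat.findGreatest_is_greatest (Nat.lt_succ_self k) hkB
        · intro hPk1
          unfold P at hPk1
          have := hmono (k + 1)
          push_cast at hPk1
          omega
      unfold P at hkP hnext
      push_neg at hnext
      have hne : ((k:ℤ) + 1) - l.parts (k+1) ≠ n := by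
        have := h2 (k+1); push_cast at this ⊢; omega
      have hlk1 : (l.parts (k+1) : ℤ) ≤ (k : ℤ) - n := by push_cast at hnext ⊢; omega
      have hcnn : 0 ≤ (k : ℤ) - n := le_trans (by positivity) hlk1
      refine ⟨((k:ℤ) - n).toNat, ?_⟩
      set c : ℕ := ((k:ℤ) - n).toNat with hcdef
      have hcz : (c : ℤ) = (k:ℤ) - n := Int.toNat_of_nonneg hcnn
      have hup : c + 1 ≤ l.parts k := by omega
      have hlow : ¬ (c + 1 ≤ l.parts (k+1)) := by omega
      have hm1 : k + 1 ≤ m.parts c := (conj_symm l m h c k).mp hup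
      have hm2 : ¬ (k + 1 + 1 ≤ m.parts c) := fun hh =>
        hlow ((conj_symm l m h c (k+1)).mpr hh)
      have : m.parts c = k + 1 := by omega
      rw [this]; push_cast; omega
end

section
/- For any s-core σ, there is at most one self-conjugate partition with s-core σ and s-weight 1. -/
namespace StmtAux

open SeqPartition Finset

/-- Partitions are determined by their parts. -/
lemma partition_ext {l m : SeqPartition} (h : l.parts = m.parts) : l = m := by
  cases l; cases m; simpa using h

/-- The beta enumeration is strictly antitone. -/
lemma strictAnti_f (l : SeqPartition) :
    StrictAnti (fun r : ℕ => (l.parts r : ℤ) - (r + 1)) := by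
  intro i j hij
  have h1 : l.parts j ≤ l.parts i := l.antitone hij.le
  have h2 : (l.parts j : ℤ) ≤ (l.parts i : ℤ) := by exact_mod_cast h1
  have h3 : (i : ℤ) < (j : ℤ) := by exact_mod_cast hij
  simp only
  omega

/-- Two strictly antitone maps `ℕ → ℤ` with the same range agree. -/
lemma strictAnti_range_eq {f g : ℕ → ℤ} (hf : StrictAnti f) (hg : StrictAnti g)
    (h : Set.range f = Set.range g) : ∀ n, f n = g n := by
  intro n
  induction n using Nat.strongRecOn with
  | _ n IH =>
    obtain ⟨j, hj⟩ : f n ∈ Set.range g := h ▸ Set.mem_range_self n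
    obtain ⟨i, hi⟩ : g n ∈ Set.range f := h.symm ▸ Set.mem_range_self n
    rcases lt_trichotomy (f n) (g n) with hlt | heq | hgt
    · exfalso
      have hin : i < n := by
        by_contra hc
        push_neg at hc
        have : f i ≤ f n := hf.antitone hc
        omega
      have := IH i hin
      have : g i = g n := by omega
      exact absurd (hg.injective this) (Nat.ne_of_lt hin)
    · exact heq
    · exfalso
      have hjn : j < n := by
        by_contra hc
        push_neg at hc
        have : g j ≤ g n := hg.antitone hc
        omega
      have := IH j hjn
      have : f j = f n := by omega
      exact absurd (hf.injective this) (Nat.ne_of_lt hjn)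

/-- Beta-sets determine partitions. -/
lemma betaSet_inj {l m : SeqPartition} (h : l.betaSet = m.betaSet) : l = m := by
  have key := strictAnti_range_eq (strictAnti_f l) (strictAnti_f m) h
  apply partition_ext
  ext r
  have := key r
  have this : (l.parts r : ℤ) - (r + 1) = (m.parts r : ℤ) - (r + 1) := this
  omega

/-- A bound beyond which all parts vanish. -/
lemma parts_eventually_zero (l : SeqPartition) :
    ∃ N : ℕ, ∀ r, N ≤ r → l.parts r = 0 := by
  refine ⟨l.parts.support.sup id + 1, fun r hr => ?_⟩
  by_contra hc
  have hmem : r ∈ l.parts.support := Finsupp.mem_support_iff.mpr hc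
  have := Finset.le_sup (f := id) hmem
  simp only [id] at this
  omega

lemma size_eq_sum (l : SeqPartition) {N : ℕ} (hN : ∀ r, N ≤ r → l.parts r = 0) :
    l.size = ∑ r ∈ Finset.range N, l.parts r := by
  have hsub : l.parts.support ⊆ Finset.range N := by
    intro i hi
    rw [Finset.mem_range]
    by_contra hc
    exact (Finsupp.mem_support_iff.mp hi) (hN i (by omega))
  exact Finsupp.sum_of_support_subset _ hsub _ (fun _ _ => rfl)

/-- Truncated beta-set as a finset. -/
noncomputable def trunc (l : SeqPartition) (N : ℕ) : Finset ℤ :=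
  (Finset.range N).image (fun r => (l.parts r : ℤ) - (r + 1))

lemma coe_trunc (l : SeqPartition) {N : ℕ} (hN : ∀ r, N ≤ r → l.parts r = 0) :
    (trunc l N : Set ℤ) = l.betaSet ∩ Set.Ici (-(N : ℤ)) := by
  ext x
  simp only [trunc, Finset.coe_image, Finset.coe_range, Set.mem_image, Set.mem_Iio,
    SeqPartition.betaSet, Set.mem_inter_iff, Set.mem_range, Set.mem_Ici]
  constructor
  · rintro ⟨r, hr, rfl⟩
    refine ⟨⟨r, rfl⟩, ?_⟩
    have : (0:ℤ) ≤ (l.parts r : ℤ) := Int.ofNat_nonneg _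
    have : (r : ℤ) < (N : ℤ) := by exact_mod_cast hr
    omega
  · rintro ⟨⟨r, rfl⟩, hx⟩
    refine ⟨r, ?_, rfl⟩
    by_contra hc
    push_neg at hc
    have h0 : l.parts r = 0 := hN r hc
    have : (N : ℤ) ≤ (r : ℤ) := by exact_mod_cast hc
    rw [h0] at hx
    simp at hx
    omega

lemma sum_trunc (l : SeqPartition) {N : ℕ} (hN : ∀ r, N ≤ r → l.parts r = 0) :
    ∑ x ∈ trunc l N, x = (l.size : ℤ) - ∑ r ∈ Finset.range N, ((r : ℤ) + 1) := by
  have hinj : Set.InjOn (fun r : ℕ => (l.parts r : ℤ) - (r + 1)) (Finset.range N) :=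
    (strictAnti_f l).injective.injOn
  rw [trunc, Finset.sum_image (fun a ha b hb hab => hinj ha hb hab)]
  rw [size_eq_sum l hN]
  push_cast
  rw [Finset.sum_sub_distrib]

/-- Removing an `h`-hook decreases size by exactly `h`. -/
lemma removeHook_size {h : ℕ} {l m : SeqPartition} (hrm : SeqPartition.RemoveHook h l m) :
    l.size = m.size + h := by
  obtain ⟨b, hb, hbh, hbeta⟩ := hrm
  obtain ⟨N₁, hN₁⟩ := parts_eventually_zero l
  obtain ⟨N₂, hN₂⟩ := parts_eventually_zero m
  set N : ℕ := N₁ ⊔ N₂ ⊔ ((h : ℤ) - b).toNat with hNdef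
  have hNl : ∀ r, N ≤ r → l.parts r = 0 := fun r hr => hN₁ r (by omega)
  have hNm : ∀ r, N ≤ r → m.parts r = 0 := fun r hr => hN₂ r (by omega)
  have hNb : -(N : ℤ) ≤ b - h := by
    have h1 : ((h : ℤ) - b).toNat ≤ N := by omega
    have h2 : (h : ℤ) - b ≤ (((h : ℤ) - b).toNat : ℤ) := Int.self_le_toNat _
    have h3 : ((((h:ℤ) - b).toNat : ℕ) : ℤ) ≤ (N : ℤ) := by exact_mod_cast h1
    omega
  have hbN : -(N : ℤ) ≤ b := by
    have : (0:ℤ) ≤ (h:ℤ) := Int.ofNat_nonneg _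
    omega
  have hcoel := coe_trunc l hNl
  have hcoem := coe_trunc m hNm
  have hbmem : b ∈ trunc l N := by
    rw [← Finset.mem_coe, hcoel]; exact ⟨hb, hbN⟩
  have hkey : trunc m N = insert (b - (h:ℤ)) ((trunc l N).erase b) := by
    apply Finset.coe_injective
    rw [hcoem, hbeta, Finset.coe_insert, Finset.coe_erase, hcoel]
    ext x
    simp only [Set.mem_inter_iff, Set.mem_insert_iff, Set.mem_diff, Set.mem_singleton_iff,
      Set.mem_Ici]
    constructor
    · rintro ⟨hx1 | ⟨hx2, hx3⟩, hx4⟩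
      · exact Or.inl hx1
      · exact Or.inr ⟨⟨hx2, hx4⟩, hx3⟩
    · rintro (rfl | ⟨⟨hx1, hx2⟩, hx3⟩)
      · exact ⟨Or.inl rfl, hNb⟩
      · exact ⟨Or.inr ⟨hx1, hx3⟩, hx2⟩
  have hnot : b - (h:ℤ) ∉ (trunc l N).erase b := by
    intro hc
    have := Finset.mem_of_mem_erase hc
    rw [← Finset.mem_coe, hcoel] at this
    exact hbh this.1
  have hsum : ∑ x ∈ trunc m N, x = ∑ x ∈ trunc l N, x - h := by
    rw [hkey, Finset.sum_insert hnot, Finset.sum_erase_eq_sub hbmem]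
    ring
  rw [sum_trunc l hNl, sum_trunc m hNm] at hsum
  have : (l.size : ℤ) = (m.size : ℤ) + (h : ℤ) := by linarith
  exact_mod_cast this

lemma size_le_of_rtg {s : ℕ} {a c : SeqPartition}
    (h : Relation.ReflTransGen (SeqPartition.RemoveHook s) a c) : c.size ≤ a.size := by
  induction h using Relation.ReflTransGen.head_induction_on with
  | refl => exact le_refl _
  | head h' _ ih =>
    have := removeHook_size h'
    omega

/-- If the chain drops size by exactly `s > 0`, it is a single step. -/
lemma one_step {s : ℕ} (hs : 0 < s) {l σ : SeqPartition}
    (h : Relation.ReflTransGen (SeqPartition.RemoveHook s) l σ)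
    (hw : l.size = σ.size + s) : SeqPartition.RemoveHook s l σ := by
  rcases h.cases_head with rfl | ⟨c, hstep, hrest⟩
  · omega
  · have h1 := removeHook_size hstep
    have h2 : c.size = σ.size := by omega
    have hcσ : c = σ := by
      rcases hrest.cases_head with rfl | ⟨d, hstep2, hrest2⟩
      · rfl
      · have h3 := removeHook_size hstep2
        have h4 := size_le_of_rtg hrest2
        omega
    rwa [hcσ] at hstep

/-- Galois relation between a partition and its conjugate. -/
lemma conj_galois {l m : SeqPartition} (h : SeqPartition.IsConj l m) (r c : ℕ) :
    c < m.parts r ↔ r < l.parts c := by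
  have hfin : {c' : ℕ | r + 1 ≤ l.parts c'}.Finite := by
    apply Set.Finite.subset (Finset.finite_toSet l.parts.support)
    intro c' hc'
    simp only [Set.mem_setOf_eq] at hc'
    simp only [Finset.coe_sort_coe, Finset.mem_coe, Finsupp.mem_support_iff]
    omega
  rw [h r]
  constructor
  · intro hc
    by_contra hpc
    push_neg at hpc
    have hsub : {c' : ℕ | r + 1 ≤ l.parts c'} ⊆ Set.Iio c := by
      intro c' hc'
      simp only [Set.mem_setOf_eq] at hc'
      simp only [Set.mem_Iio]
      by_contra hcc
      push_neg at hcc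
      have := l.antitone hcc
      omega
    have hle := Set.ncard_le_ncard hsub (Set.finite_Iio c)
    have : (Set.Iio c).ncard = c := by
      rw [← Finset.coe_Iio, Set.ncard_coe_finset, Nat.card_Iio]
    omega
  · intro hpc
    have hsub : Set.Iic c ⊆ {c' : ℕ | r + 1 ≤ l.parts c'} := by
      intro c' hc'
      simp only [Set.mem_Iic] at hc'
      simp only [Set.mem_setOf_eq]
      have := l.antitone hc'
      omega
    have hle := Set.ncard_le_ncard hsub hfin
    have : (Set.Iic c).ncard = c + 1 := by
      rw [← Finset.coe_Iic, Set.ncard_coe_finset, Nat.card_Iic]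
    omega

/-- Beta-set of the conjugate is the reflected complement. -/
lemma conj_betaSet {l m : SeqPartition} (h : SeqPartition.IsConj l m) (x : ℤ) :
    x ∈ m.betaSet ↔ (-1 - x) ∉ l.betaSet := by
  simp only [SeqPartition.betaSet, Set.mem_range]
  constructor
  · rintro ⟨r, hr⟩ ⟨c, hc⟩
    have hg := conj_galois h r c
    have h1 : (m.parts r : ℤ) = x + r + 1 := by omega
    have h2 : (l.parts c : ℤ) = (c : ℤ) - x := by omega
    rcases Nat.lt_or_ge c (m.parts r) with hlt | hge
    · have := hg.mp hlt
      have h3 : ((r:ℕ) : ℤ) < (l.parts c : ℤ) := by exact_mod_cast this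
      have h4 : ((c:ℕ) : ℤ) < (m.parts r : ℤ) := by exact_mod_cast hlt
      omega
    · have : ¬ r < l.parts c := fun hc2 => absurd (hg.mpr hc2) (by omega)
      have h3 : (l.parts c : ℤ) ≤ ((r:ℕ) : ℤ) := by
        have : l.parts c ≤ r := by omega
        exact_mod_cast this
      have h4 : ((m.parts r : ℕ) : ℤ) ≤ ((c:ℕ):ℤ) := by exact_mod_cast hge
      omega
  · intro hx
    -- hx : ∀ c, ¬ (-1 - x = l.parts c - (c+1)), i.e. x ≠ c - l.parts c
    push_neg at hx
    have hx' : ∀ c : ℕ, x ≠ (c : ℤ) - l.parts c := by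
      intro c hc
      exact hx c (by omega)
    by_cases hcase : x + (l.parts 0 : ℤ) < 0
    · -- small x : use r with m.parts r = 0
      refine ⟨(-x - 1).toNat, ?_⟩
      have hx0 : (0:ℤ) ≤ -x - 1 := by
        have : (0:ℤ) ≤ (l.parts 0 : ℤ) := Int.ofNat_nonneg _
        omega
      have hr : (((-x - 1).toNat : ℕ) : ℤ) = -x - 1 := Int.toNat_of_nonneg hx0
      have hq : m.parts (-x - 1).toNat = 0 := by
        by_contra hq0
        have h1 : 0 < m.parts (-x-1).toNat := by omega
        have := (conj_galois h (-x-1).toNat 0).mp h1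
        -- (-x-1).toNat < l.parts 0
        have h2 : (((-x-1).toNat : ℕ) : ℤ) < (l.parts 0 : ℤ) := by exact_mod_cast this
        omega
      rw [hq, hr]
      omega
    · -- large x : find minimal c with x < c - l.parts c
      push_neg at hcase
      have hex : ∃ c : ℕ, x < (c : ℤ) - l.parts c := by
        refine ⟨(x + l.parts 0 + 1).toNat, ?_⟩
        have h0 : (0:ℤ) ≤ x + l.parts 0 + 1 := by omega
        have hr : (((x + l.parts 0 + 1).toNat : ℕ) : ℤ) = x + l.parts 0 + 1 :=
          Int.toNat_of_nonneg h0
        have hle : (l.parts (x + (l.parts 0:ℤ) + 1).toNat : ℤ) ≤ (l.parts 0 : ℤ) := by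
          exact_mod_cast l.antitone (Nat.zero_le _)
        omega
      classical
      set c0 := Nat.find hex with hc0def
      have hPc0 : x < (c0 : ℤ) - l.parts c0 := Nat.find_spec hex
      have hc0pos : 0 < c0 := by
        rcases Nat.eq_zero_or_pos c0 with h0 | h0
        · exfalso
          rw [h0] at hPc0
          simp only [Nat.cast_zero, zero_sub] at hPc0
          have : (0:ℤ) ≤ (l.parts 0 : ℤ) := Int.ofNat_nonneg _
          omega
        · exact h0
      have hprev : ¬ x < ((c0 - 1 : ℕ) : ℤ) - l.parts (c0 - 1) :=
        Nat.find_min hex (by omega)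
      push_neg at hprev
      have hprev' : ((c0 - 1 : ℕ) : ℤ) - l.parts (c0 - 1) < x :=
        lt_of_le_of_ne hprev (fun hh => hx' (c0 - 1) hh.symm)
      have hc1 : ((c0 - 1 : ℕ) : ℤ) = (c0 : ℤ) - 1 := by omega
      -- p (c0 - 1) ≥ c0 - x  and  p c0 ≤ c0 - x - 1
      have hp1 : (c0 : ℤ) - x ≤ (l.parts (c0 - 1) : ℤ) := by omega
      have hp2 : (l.parts c0 : ℤ) ≤ (c0 : ℤ) - x - 1 := by omega
      have hrnn : (0:ℤ) ≤ (c0 : ℤ) - x - 1 := by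
        have : (0:ℤ) ≤ (l.parts c0 : ℤ) := Int.ofNat_nonneg _
        omega
      refine ⟨((c0 : ℤ) - x - 1).toNat, ?_⟩
      set r := ((c0 : ℤ) - x - 1).toNat with hrdef
      have hr : ((r : ℕ) : ℤ) = (c0 : ℤ) - x - 1 := Int.toNat_of_nonneg hrnn
      have hge : c0 ≤ m.parts r := by
        have := (conj_galois h r (c0 - 1)).mpr (by omega)
        omega
      have hle : m.parts r ≤ c0 := by
        by_contra hcc
        push_neg at hcc
        have := (conj_galois h r c0).mp hcc
        omega
      have : (m.parts r : ℤ) = (c0 : ℤ) := by omega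
      omega

end StmtAux
namespace StmtAux

/-- No "both-in" reflected pair in the modified set, in the symmetric-hook case. -/
lemma no_pair {s b : ℤ} (hs : 0 < s) (h2 : 2 * b = s - 1) {B : Set ℤ}
    (hB : ∀ x, x ∈ B ↔ -1 - x ∉ B) (hb : b ∈ B) (hbs : b - s ∉ B)
    {x : ℤ} (hx : x = b - s ∨ (x ∈ B ∧ x ≠ b))
    (hx2 : -1 - x = b - s ∨ (-1 - x ∈ B ∧ -1 - x ≠ b)) : False := by
  rcases hx with rfl | ⟨hxB, hxb⟩
  · rcases hx2 with h | ⟨h1, h2'⟩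
    · omega
    · exact h2' (by omega)
  · rcases hx2 with h | ⟨h1, _⟩
    · exact hxb (by omega)
    · exact (hB x).mp hxB h1

/-- The key uniqueness: the added/removed beta element is determined. -/
lemma key_unique {s : ℤ} (hs : 0 < s) {B C : Set ℤ}
    (hB : ∀ x, x ∈ B ↔ -1 - x ∉ B) (hC : ∀ x, x ∈ C ↔ -1 - x ∉ C)
    {b b' : ℤ} (hb : b ∈ B) (hbs : b - s ∉ B) (hb' : b' ∈ C) (hbs' : b' - s ∉ C)
    (hSS : insert (b - s) (B \ {b}) = insert (b' - s) (C \ {b'})) : b = b' := by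
  have memL : ∀ x : ℤ, x ∈ insert (b - s) (B \ {b}) ↔ (x = b - s ∨ (x ∈ B ∧ x ≠ b)) := by
    intro x
    simp [Set.mem_insert_iff, Set.mem_diff, Set.mem_singleton_iff]
  have memR : ∀ x : ℤ, x ∈ insert (b' - s) (C \ {b'}) ↔ (x = b' - s ∨ (x ∈ C ∧ x ≠ b')) := by
    intro x
    simp [Set.mem_insert_iff, Set.mem_diff, Set.mem_singleton_iff]
  have mem_iff : ∀ x : ℤ, (x = b - s ∨ (x ∈ B ∧ x ≠ b)) ↔ (x = b' - s ∨ (x ∈ C ∧ x ≠ b')) := by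
    intro x
    rw [← memL, hSS, memR]
  by_cases h2 : 2 * b = s - 1 <;> by_cases h2' : 2 * b' = s - 1
  · omega
  · -- b symmetric, b' not : contradiction
    exfalso
    -- pair on the C side: x = s - 1 - b', -1 - x = b' - s
    have hxC : (s : ℤ) - 1 - b' ∈ C := by
      rw [hC]
      have he : -1 - ((s:ℤ) - 1 - b') = b' - s := by ring
      rw [he]
      simpa using hbs'
    have hR1 : ((s:ℤ) - 1 - b' = b' - s ∨ ((s:ℤ) - 1 - b' ∈ C ∧ (s:ℤ) - 1 - b' ≠ b')) :=
      Or.inr ⟨hxC, by omega⟩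
    have hR2 : (-1 - ((s:ℤ) - 1 - b') = b' - s ∨
        (-1 - ((s:ℤ) - 1 - b') ∈ C ∧ -1 - ((s:ℤ) - 1 - b') ≠ b')) := Or.inl (by ring)
    exact no_pair hs h2 hB hb hbs ((mem_iff _).mpr hR1)
      ((mem_iff _).mpr hR2)
  · -- b' symmetric, b not : mirror
    exfalso
    have hxB : (s : ℤ) - 1 - b ∈ B := by
      rw [hB]
      have he : -1 - ((s:ℤ) - 1 - b) = b - s := by ring
      rw [he]
      simpa using hbs
    have hL1 : ((s:ℤ) - 1 - b = b - s ∨ ((s:ℤ) - 1 - b ∈ B ∧ (s:ℤ) - 1 - b ≠ b)) :=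
      Or.inr ⟨hxB, by omega⟩
    have hL2 : (-1 - ((s:ℤ) - 1 - b) = b - s ∨
        (-1 - ((s:ℤ) - 1 - b) ∈ B ∧ -1 - ((s:ℤ) - 1 - b) ≠ b)) := Or.inl (by ring)
    exact no_pair hs h2' hC hb' hbs' ((mem_iff _).mp hL1) ((mem_iff _).mp hL2)
  · -- neither symmetric
    -- both-out pair at b on the left
    have houtb : ¬ (b = b' - s ∨ (b ∈ C ∧ b ≠ b')) := by
      rw [← mem_iff]
      rintro (h | ⟨_, hne⟩)
      · omega
      · exact hne rfl
    have houtb2 : ¬ (-1 - b = b' - s ∨ (-1 - b ∈ C ∧ -1 - b ≠ b')) := by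
      rw [← mem_iff]
      rintro (h | ⟨hmem, _⟩)
      · omega
      · exact (hB b).mp hb hmem
    push_neg at houtb houtb2
    by_cases hbb : b = b'
    · exact hbb
    exfalso
    have hbC : b ∉ C := fun h => hbb (houtb.2 h)
    have hbC2 : -1 - b ∈ C := by
      rw [hC]
      intro hcc
      have he : -1 - (-1 - b) = b := by ring
      rw [he] at hcc
      exact hbC hcc
    have hbeq : -1 - b = b' := houtb2.2 hbC2
    -- both-in pair at s - 1 - b on the left
    have hxB : (s : ℤ) - 1 - b ∈ B := by
      rw [hB]
      have he : -1 - ((s:ℤ) - 1 - b) = b - s := by ring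
      rw [he]
      simpa using hbs
    have hL1 : ((s:ℤ) - 1 - b = b - s ∨ ((s:ℤ) - 1 - b ∈ B ∧ (s:ℤ) - 1 - b ≠ b)) :=
      Or.inr ⟨hxB, by omega⟩
    have hL2 : (-1 - ((s:ℤ) - 1 - b) = b - s ∨
        (-1 - ((s:ℤ) - 1 - b) ∈ B ∧ -1 - ((s:ℤ) - 1 - b) ≠ b)) := Or.inl (by ring)
    have hR1 := (mem_iff _).mp hL1
    have hR2 := (mem_iff _).mp hL2
    rcases hR1 with h | ⟨hmem1, hne1⟩
    · omega
    rcases hR2 with h | ⟨hmem2, _⟩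
    · omega
    · exact (hC _).mp hmem1 hmem2

/-- Recover the big beta-set from the small one. -/
lemma recover {B S : Set ℤ} {b h : ℤ} (hb : b ∈ B) (hbs : b - h ∉ B) (hne : b ≠ b - h)
    (hS : S = insert (b - h) (B \ {b})) : B = insert b (S \ {b - h}) := by
  subst hS
  ext x
  simp only [Set.mem_insert_iff, Set.mem_diff, Set.mem_singleton_iff]
  constructor
  · intro hx
    by_cases hxb : x = b
    · exact Or.inl hxb
    · exact Or.inr ⟨Or.inr ⟨hx, hxb⟩, fun he => hbs (he ▸ hx)⟩
  · rintro (rfl | ⟨(h1 | ⟨h1, _⟩), h2⟩)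
    · exact hb
    · exact absurd h1 h2
    · exact h1

end StmtAux
/-- at most one self-conjugate partition with `s`-core `σ` and
`s`-weight `1`. -/
theorem stmt5 (s : ℕ) (hs : 0 < s) (σ : SeqPartition) (hσ : SeqPartition.IsCore s σ)
    (l m : SeqPartition)
    (hl : SeqPartition.HasCore s l σ) (hlsc : SeqPartition.IsConj l l)
    (hlw : l.size = σ.size + s)
    (hm : SeqPartition.HasCore s m σ) (hmsc : SeqPartition.IsConj m m)
    (hmw : m.size = σ.size + s) :
    l = m := by
  obtain ⟨b, hb, hbs, hβ⟩ := StmtAux.one_step hs hl.1 hlw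
  obtain ⟨b', hb', hbs', hβ'⟩ := StmtAux.one_step hs hm.1 hmw
  have hBl : ∀ x : ℤ, x ∈ l.betaSet ↔ -1 - x ∉ l.betaSet := fun x =>
    StmtAux.conj_betaSet hlsc x
  have hBm : ∀ x : ℤ, x ∈ m.betaSet ↔ -1 - x ∉ m.betaSet := fun x =>
    StmtAux.conj_betaSet hmsc x
  have hsZ : (0 : ℤ) < (s : ℤ) := by exact_mod_cast hs
  have hSS : insert (b - (s:ℤ)) (l.betaSet \ {b}) =
      insert (b' - (s:ℤ)) (m.betaSet \ {b'}) := by rw [← hβ, ← hβ']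
  have hbb : b = b' := StmtAux.key_unique hsZ hBl hBm hb hbs hb' hbs' hSS
  have hne : b ≠ b - (s:ℤ) := by omega
  have hne' : b' ≠ b' - (s:ℤ) := by omega
  have h1 : l.betaSet = insert b (σ.betaSet \ {b - (s:ℤ)}) :=
    StmtAux.recover hb hbs hne hβ
  have h2 : m.betaSet = insert b' (σ.betaSet \ {b' - (s:ℤ)}) :=
    StmtAux.recover hb' hbs' hne' hβ'
  apply StmtAux.betaSet_inj
  rw [h1, h2, hbb]
end

section
/- Let s, t be coprime integers greater than 1 and x ∈ ℤ. Suppose λ and μ are partitions with the same s-core and the same t-core, and x is a pinch-point for λ. Then |μ| ≥ |λ|, with equality if and only if x is also a pinch-point for μ. -/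
namespace Stmt10Aux
open SeqPartition

/-- a bound beyond which all parts vanish -/
lemma exists_bound (l : SeqPartition) : ∃ N : ℕ, ∀ r, N ≤ r → l.parts r = 0 := by
  refine ⟨(l.parts.support.sup id) + 1, fun r hr => ?_⟩
  by_contra h
  have : r ∈ l.parts.support := Finsupp.mem_support_iff.mpr h
  have h2 := Finset.le_sup (f := id) this
  simp only [id] at h2
  omega

lemma mem_beta_of_le (l : SeqPartition) {N : ℕ} (hN : ∀ r, N ≤ r → l.parts r = 0)
    {n : ℤ} (hn : n < -(N:ℤ)) : n ∈ l.betaSet := by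
  refine ⟨(-n-1).toNat, ?_⟩
  have h1 : ((-n-1).toNat : ℤ) = -n-1 := Int.toNat_of_nonneg (by omega)
  have h2 : N ≤ (-n-1).toNat := by omega
  show (l.parts (-n-1).toNat : ℤ) - ((-n-1).toNat + 1) = n
  rw [hN _ h2]
  push_cast [h1]
  ring

/-- the truncated beta set as a finset -/
noncomputable def betaF (l : SeqPartition) (N : ℕ) : Finset ℤ :=
  (Finset.range N).image (fun r => (l.parts r : ℤ) - r - 1)

lemma betaF_strictanti (l : SeqPartition) {r r' : ℕ} (h : r < r') :
    (l.parts r' : ℤ) - r' - 1 < (l.parts r : ℤ) - r - 1 := by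
  have := l.antitone h.le
  omega

lemma betaF_coe (l : SeqPartition) {N : ℕ} (hN : ∀ r, N ≤ r → l.parts r = 0) :
    (betaF l N : Set ℤ) = l.betaSet ∩ {n | -(N:ℤ) ≤ n} := by
  ext n
  simp only [betaF, Finset.coe_image, Finset.coe_range, Set.mem_image,
    Set.mem_Iio, Set.mem_inter_iff, Set.mem_setOf_eq, betaSet, Set.mem_range]
  constructor
  · rintro ⟨r, hr, rfl⟩
    refine ⟨⟨r, by ring⟩, ?_⟩
    have : (0:ℤ) ≤ l.parts r := Int.natCast_nonneg _
    omega
  · rintro ⟨⟨r, rfl⟩, h2⟩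
    refine ⟨r, ?_, by ring⟩
    by_contra hr
    rw [hN r (by omega)] at h2
    simp at h2
    omega

lemma sum_betaF (l : SeqPartition) {N : ℕ} (hN : ∀ r, N ≤ r → l.parts r = 0) :
    (∑ n ∈ betaF l N, n) = (l.size : ℤ) - ∑ r ∈ Finset.range N, ((r:ℤ) + 1) := by
  have hinj : Set.InjOn (fun r : ℕ => (l.parts r : ℤ) - r - 1) (Finset.range N) := by
    intro a _ b _ hab
    by_contra hne
    rcases Nat.lt_or_ge a b with h | h
    · have := betaF_strictanti l h; simp only at hab; omega
    · have hba : b < a := by omega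
      have := betaF_strictanti l hba; simp only at hab; omega
  rw [betaF, Finset.sum_image (fun a ha b hb => hinj ha hb)]
  have hsize : (l.size : ℤ) = ∑ r ∈ Finset.range N, (l.parts r : ℤ) := by
    have : l.size = ∑ r ∈ Finset.range N, l.parts r := by
      rw [size, Finsupp.sum_of_support_subset l.parts ?_ (fun _ v => v) (fun _ _ => rfl)]
      intro r hr
      simp only [Finset.mem_range]
      by_contra h
      exact (Finsupp.mem_support_iff.mp hr) (hN r (by omega))
    rw [this]; push_cast; ring
  rw [hsize, ← Finset.sum_sub_distrib]
  apply Finset.sum_congr rfl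
  intro r _; ring


/-- beta sets differ in finitely many places -/
lemma bdiff_finite (l m : SeqPartition) : (l.betaSet \ m.betaSet).Finite := by
  obtain ⟨Nl, hNl⟩ := exists_bound l
  obtain ⟨Nm, hNm⟩ := exists_bound m
  apply Set.Finite.subset (betaF l (max Nl Nm)).finite_toSet
  intro n hn
  rw [betaF_coe l (fun r hr => hNl r (le_trans (le_max_left _ _) hr))]
  refine ⟨hn.1, ?_⟩
  show -((max Nl Nm : ℕ) : ℤ) ≤ n
  by_contra h
  push_neg at h
  exact hn.2 (mem_beta_of_le m (N := max Nl Nm)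
    (fun r hr => hNm r (le_trans (le_max_right _ _) hr)) h)

/-- relative cardinality via any finite superset of the symmetric difference -/
lemma keycard (A B : Set ℤ) (K : Finset ℤ) (h : ∀ n, (n ∈ A ↔ n ∈ B) ∨ n ∈ K) :
    ((A \ B).ncard : ℤ) - ((B \ A).ncard : ℤ)
      = ((A ∩ ↑K).ncard : ℤ) - ((B ∩ ↑K).ncard : ℤ) := by
  have hsub : ∀ (X Y : Set ℤ), (∀ n, (n ∈ X ↔ n ∈ Y) ∨ n ∈ K) →
      (X ∩ ↑K).ncard = (X ∩ Y ∩ ↑K).ncard + (X \ Y).ncard := by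
    intro X Y hXY
    have hdecomp : X ∩ ↑K = (X ∩ Y ∩ ↑K) ∪ (X \ Y) := by
      ext n
      constructor
      · rintro ⟨hnX, hnK⟩
        by_cases hnY : n ∈ Y
        · exact Or.inl ⟨⟨hnX, hnY⟩, hnK⟩
        · exact Or.inr ⟨hnX, hnY⟩
      · rintro (⟨⟨h1, _⟩, h2⟩ | ⟨h1, h2⟩)
        · exact ⟨h1, h2⟩
        · rcases hXY n with h3 | h3
          · exact absurd (h3.mp h1) h2
          · exact ⟨h1, h3⟩
    have hdisj : Disjoint (X ∩ Y ∩ ↑K) (X \ Y) := by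
      rw [Set.disjoint_left]
      rintro n ⟨⟨_, h1⟩, _⟩ ⟨_, h2⟩
      exact h2 h1
    have hfin1 : (X ∩ Y ∩ ↑K).Finite := Set.Finite.subset K.finite_toSet (fun n hn => hn.2)
    have hfin2 : (X \ Y).Finite := by
      apply Set.Finite.subset K.finite_toSet
      intro n hn
      rcases hXY n with h3 | h3
      · exact absurd (h3.mp hn.1) hn.2
      · exact h3
    rw [hdecomp, Set.ncard_union_eq hdisj hfin1 hfin2]
  have h1 := hsub A B h
  have h2 := hsub B A (fun n => (h n).imp (fun hy => hy.symm) id)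
  have hAB : A ∩ B ∩ ↑K = B ∩ A ∩ ↑K := by rw [Set.inter_comm A B]
  rw [h1, h2, hAB]
  push_cast
  ring

/-- signed count of beta-set difference on the residue class `i` mod `d` -/
noncomputable def cdiff (d : ℕ) (i : ℤ) (l m : SeqPartition) : ℤ :=
  ((l.betaSet \ m.betaSet) ∩ {n | n % (d:ℤ) = i}).ncard
    - ((m.betaSet \ l.betaSet) ∩ {n | n % (d:ℤ) = i}).ncard

lemma cdiff_eq_keycard (d : ℕ) (i : ℤ) (l m : SeqPartition) (K : Finset ℤ)
    (hK : ∀ n, (n ∈ l.betaSet ↔ n ∈ m.betaSet) ∨ n ∈ K) :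
    cdiff d i l m = (((l.betaSet ∩ {n | n % (d:ℤ) = i}) ∩ ↑K).ncard : ℤ)
      - (((m.betaSet ∩ {n | n % (d:ℤ) = i}) ∩ ↑K).ncard : ℤ) := by
  have hK' : ∀ n, (n ∈ l.betaSet ∩ {n | n % (d:ℤ) = i} ↔ n ∈ m.betaSet ∩ {n | n % (d:ℤ) = i})
      ∨ n ∈ K := by
    intro n
    rcases hK n with h1 | h1
    · exact Or.inl (by rw [Set.mem_inter_iff, Set.mem_inter_iff, h1])
    · exact Or.inr h1
  have hkey := keycard (l.betaSet ∩ {n | n % (d:ℤ) = i}) (m.betaSet ∩ {n | n % (d:ℤ) = i}) K hK'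
  have e1 : (l.betaSet ∩ {n | n % (d:ℤ) = i}) \ (m.betaSet ∩ {n | n % (d:ℤ) = i})
      = (l.betaSet \ m.betaSet) ∩ {n | n % (d:ℤ) = i} := by
    ext n; constructor
    · rintro ⟨⟨h1, h2⟩, h3⟩; exact ⟨⟨h1, fun hc => h3 ⟨hc, h2⟩⟩, h2⟩
    · rintro ⟨⟨h1, h3⟩, h2⟩; exact ⟨⟨h1, h2⟩, fun hc => h3 hc.1⟩
  have e2 : (m.betaSet ∩ {n | n % (d:ℤ) = i}) \ (l.betaSet ∩ {n | n % (d:ℤ) = i})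
      = (m.betaSet \ l.betaSet) ∩ {n | n % (d:ℤ) = i} := by
    ext n; constructor
    · rintro ⟨⟨h1, h2⟩, h3⟩; exact ⟨⟨h1, fun hc => h3 ⟨hc, h2⟩⟩, h2⟩
    · rintro ⟨⟨h1, h3⟩, h2⟩; exact ⟨⟨h1, h2⟩, fun hc => h3 hc.1⟩
  rw [e1, e2] at hkey
  rw [cdiff, hkey]

/-- a finset covering the symmetric difference of two beta sets -/
noncomputable def sdF (l m : SeqPartition) : Finset ℤ :=
  (bdiff_finite l m).toFinset ∪ (bdiff_finite m l).toFinset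

lemma sdF_spec (l m : SeqPartition) :
    ∀ n, (n ∈ l.betaSet ↔ n ∈ m.betaSet) ∨ n ∈ sdF l m := by
  intro n
  by_cases h1 : n ∈ l.betaSet <;> by_cases h2 : n ∈ m.betaSet
  · exact Or.inl (by tauto)
  · exact Or.inr (by simp [sdF, Set.Finite.mem_toFinset]; tauto)
  · exact Or.inr (by simp [sdF, Set.Finite.mem_toFinset]; tauto)
  · exact Or.inl (by tauto)

lemma cdiff_cocycle (d : ℕ) (i : ℤ) (l m k : SeqPartition) :
    cdiff d i l k = cdiff d i l m + cdiff d i m k := by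
  set K : Finset ℤ := sdF l m ∪ sdF m k ∪ sdF l k with hK
  have hlm : ∀ n, (n ∈ l.betaSet ↔ n ∈ m.betaSet) ∨ n ∈ K := by
    intro n; rcases sdF_spec l m n with h | h
    · exact Or.inl h
    · exact Or.inr (by simp [hK]; tauto)
  have hmk : ∀ n, (n ∈ m.betaSet ↔ n ∈ k.betaSet) ∨ n ∈ K := by
    intro n; rcases sdF_spec m k n with h | h
    · exact Or.inl h
    · exact Or.inr (by simp [hK]; tauto)
  have hlk : ∀ n, (n ∈ l.betaSet ↔ n ∈ k.betaSet) ∨ n ∈ K := by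
    intro n; rcases sdF_spec l k n with h | h
    · exact Or.inl h
    · exact Or.inr (by simp [hK]; tauto)
  rw [cdiff_eq_keycard d i l m K hlm, cdiff_eq_keycard d i m k K hmk,
    cdiff_eq_keycard d i l k K hlk]
  ring

lemma cdiff_self (d : ℕ) (i : ℤ) (l : SeqPartition) : cdiff d i l l = 0 := by
  simp [cdiff]

lemma cdiff_antisymm (d : ℕ) (i : ℤ) (l m : SeqPartition) : cdiff d i l m = - cdiff d i m l := by
  rw [cdiff, cdiff]; ring

/-- removing a `d`-hook does not change class counts mod `d` -/
lemma cdiff_removeHook {d : ℕ} (hd : 0 < d) (i : ℤ) {l m : SeqPartition}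
    (h : SeqPartition.RemoveHook d l m) : cdiff d i l m = 0 := by
  obtain ⟨b, hb, hb', hm⟩ := h
  have hne : b - (d:ℤ) ≠ b := by
    intro hc; have : (d:ℤ) = 0 := by omega
    simp [this] at hb'; omega
  have h1 : l.betaSet \ m.betaSet = {b} := by
    ext n
    rw [hm]
    simp only [Set.mem_diff, Set.mem_insert_iff, Set.mem_singleton_iff, Set.mem_diff, not_or]
    constructor
    · rintro ⟨h1, h2, h3⟩
      by_contra hc
      exact h3 ⟨h1, hc⟩
    · rintro rfl
      refine ⟨hb, fun hc => hb' (hc ▸ hb), fun hc => hc.2 rfl⟩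
  have h2 : m.betaSet \ l.betaSet = {b - (d:ℤ)} := by
    ext n
    rw [hm]
    simp only [Set.mem_diff, Set.mem_insert_iff, Set.mem_singleton_iff]
    constructor
    · rintro ⟨h1 | ⟨h1, _⟩, h2⟩
      · exact h1
      · exact absurd h1 h2
    · rintro rfl
      exact ⟨Or.inl rfl, hb'⟩
  rw [cdiff, h1, h2]
  have hmod : (b - (d:ℤ)) % d = b % d := by
    rw [Int.sub_emod, Int.emod_self, sub_zero, Int.emod_emod_of_dvd _ dvd_rfl]
  by_cases hi : b % (d:ℤ) = i
  · have e1 : ({b} : Set ℤ) ∩ {n | n % (d:ℤ) = i} = {b} := by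
      ext n; simp only [Set.mem_inter_iff, Set.mem_singleton_iff, Set.mem_setOf_eq]
      constructor
      · exact fun h => h.1
      · rintro rfl; exact ⟨rfl, hi⟩
    have e2 : ({b - (d:ℤ)} : Set ℤ) ∩ {n | n % (d:ℤ) = i} = {b - (d:ℤ)} := by
      ext n; simp only [Set.mem_inter_iff, Set.mem_singleton_iff, Set.mem_setOf_eq]
      constructor
      · exact fun h => h.1
      · rintro rfl; exact ⟨rfl, hmod.trans hi⟩
    rw [e1, e2]; simp
  · have e1 : ({b} : Set ℤ) ∩ {n | n % (d:ℤ) = i} = ∅ := by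
      ext n; simp only [Set.mem_inter_iff, Set.mem_singleton_iff, Set.mem_setOf_eq,
        Set.mem_empty_iff_false, iff_false, not_and]
      rintro rfl; exact hi
    have e2 : ({b - (d:ℤ)} : Set ℤ) ∩ {n | n % (d:ℤ) = i} = ∅ := by
      ext n; simp only [Set.mem_inter_iff, Set.mem_singleton_iff, Set.mem_setOf_eq,
        Set.mem_empty_iff_false, iff_false, not_and]
      rintro rfl; rw [hmod]; exact hi
    rw [e1, e2]; simp

lemma cdiff_reflTransGen {d : ℕ} (hd : 0 < d) (i : ℤ) {l c : SeqPartition}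
    (h : Relation.ReflTransGen (SeqPartition.RemoveHook d) l c) : cdiff d i l c = 0 := by
  induction h with
  | refl => exact cdiff_self d i l
  | tail hab hbc ih =>
    rename_i b c'
    rw [cdiff_cocycle d i l b c', ih, cdiff_removeHook hd i hbc]
    ring

lemma cdiff_of_hasCore {d : ℕ} (hd : 0 < d) (i : ℤ) {l m c : SeqPartition}
    (h1 : SeqPartition.HasCore d l c) (h2 : SeqPartition.HasCore d m c) :
    cdiff d i l m = 0 := by
  rw [cdiff_cocycle d i l c m, cdiff_reflTransGen hd i h1.1,
    cdiff_antisymm, cdiff_reflTransGen hd i h2.1]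
  ring


/-! ### coordinates: `n = s*t*qq + s*cc + t*bb + x` -/

def bb (s : ℕ) (v x n : ℤ) : ℤ := s - ((x - n) * v) % s

def aa (s t : ℕ) (v x n : ℤ) : ℤ := (n - x - bb s v x n * t) / s

def qq (s t : ℕ) (v x n : ℤ) : ℤ := (aa s t v x n + t - 1) / t

def cc (s t : ℕ) (v x n : ℤ) : ℤ := aa s t v x n - t * qq s t v x n

section Coord

variable {s t : ℕ} {u v x : ℤ}

lemma bb_pos (hs : 0 < s) (n : ℤ) : 1 ≤ bb s v x n := by
  have := Int.emod_lt_of_pos ((x - n) * v) (by exact_mod_cast hs : (0:ℤ) < s)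
  rw [bb]; omega

lemma bb_le (hs : 0 < s) (n : ℤ) : bb s v x n ≤ s := by
  have hs' : ((s:ℤ)) ≠ 0 := by exact_mod_cast hs.ne'
  have := Int.emod_nonneg ((x - n) * v) hs'
  rw [bb]; omega

lemma bb_dvd (huv : (s:ℤ) * u + (t:ℤ) * v = 1) (n : ℤ) :
    (s:ℤ) ∣ (n - x - bb s v x n * t) := by
  have hw := Int.mul_ediv_add_emod ((x - n) * v) s
  refine ⟨-t - (x - n) * u - ((x - n) * v / s) * t, ?_⟩
  rw [bb]
  linear_combination (t:ℤ) * hw + (x - n) * huv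

lemma saa (huv : (s:ℤ) * u + (t:ℤ) * v = 1) (n : ℤ) :
    (s:ℤ) * aa s t v x n = n - x - bb s v x n * t := by
  rw [aa, Int.mul_ediv_cancel' (bb_dvd huv n)]

lemma coord_id (huv : (s:ℤ) * u + (t:ℤ) * v = 1) (n : ℤ) :
    (s:ℤ) * t * qq s t v x n + s * cc s t v x n + t * bb s v x n + x = n := by
  have h1 := saa (x := x) huv n
  rw [cc]
  linear_combination h1

lemma cc_range (ht : 0 < t) (n : ℤ) : -(t:ℤ) < cc s t v x n ∧ cc s t v x n ≤ 0 := by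
  have ht' : ((t:ℤ)) ≠ 0 := by exact_mod_cast ht.ne'
  have h1 := Int.mul_ediv_add_emod (aa s t v x n + t - 1) t
  have h2 := Int.emod_nonneg (aa s t v x n + t - 1) ht'
  have h3 := Int.emod_lt_of_pos (aa s t v x n + t - 1) (by exact_mod_cast ht : (0:ℤ) < t)
  rw [cc, qq]
  omega

lemma bb_congr {n n' : ℤ} (h : n % (s:ℤ) = n' % (s:ℤ)) : bb s v x n = bb s v x n' := by
  have h1 : (x - n) * v % (s:ℤ) = (x - n') * v % (s:ℤ) := by
    have : (x - n) ≡ (x - n') [ZMOD (s:ℤ)] := Int.ModEq.sub_left x h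
    exact this.mul_right v
  rw [bb, bb, h1]

lemma cc_congr (ht : 0 < t) (huv : (s:ℤ) * u + (t:ℤ) * v = 1)
    {n n' : ℤ} (h : n % (t:ℤ) = n' % (t:ℤ)) :
    cc s t v x n = cc s t v x n' := by
  have hdvd : (t:ℤ) ∣ (n' - n) := Int.ModEq.dvd h
  have h2 : (t:ℤ) ∣ (s:ℤ) * (aa s t v x n' - aa s t v x n) := by
    have e1 := saa (x := x) huv n
    have e2 := saa (x := x) huv n'
    have heq : (s:ℤ) * (aa s t v x n' - aa s t v x n)
        = (n' - n) + (bb s v x n - bb s v x n') * t := by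
      have hb : bb s v x n = bb s v x n' →  True := fun _ => trivial
      linear_combination e2 - e1
    rw [heq]
    exact dvd_add hdvd (Dvd.intro_left _ rfl)
  have h3 : (t:ℤ) ∣ (aa s t v x n' - aa s t v x n) := by
    have heq : aa s t v x n' - aa s t v x n
        = u * ((s:ℤ) * (aa s t v x n' - aa s t v x n))
          + (t:ℤ) * (v * (aa s t v x n' - aa s t v x n)) := by
      linear_combination (aa s t v x n' - aa s t v x n) * huv.symm
    rw [heq]
    exact dvd_add (Dvd.dvd.mul_left h2 u) (Dvd.intro _ rfl)
  have h4 : (t:ℤ) ∣ (cc s t v x n' - cc s t v x n) := by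
    rw [cc, cc]
    have heq : aa s t v x n' - t * qq s t v x n' - (aa s t v x n - t * qq s t v x n)
        = (aa s t v x n' - aa s t v x n) + t * (qq s t v x n - qq s t v x n') := by ring
    rw [heq]
    exact dvd_add h3 (Dvd.intro _ rfl)
  have r1 := cc_range (s := s) (v := v) (x := x) ht n
  have r2 := cc_range (s := s) (v := v) (x := x) ht n'
  obtain ⟨k, hk⟩ := h4
  have ht' : (0:ℤ) < t := by exact_mod_cast ht
  have hk0 : k = 0 := by
    rcases lt_trichotomy k 0 with hlt | heq | hgt
    · nlinarith
    · exact heq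
    · nlinarith
  simp [hk0] at hk
  omega

/-- coprimality transfer: if `s ∣ t * z` then `s ∣ z` -/
lemma cop_dvd (huv : (s:ℤ) * u + (t:ℤ) * v = 1) {z : ℤ} (h : (s:ℤ) ∣ (t:ℤ) * z) :
    (s:ℤ) ∣ z := by
  have heq : z = (s:ℤ) * (u * z) + v * ((t:ℤ) * z) := by linear_combination z * huv.symm
  rw [heq]
  exact dvd_add (Dvd.intro _ rfl) (Dvd.dvd.mul_left h v)

lemma mem_up_iff (hs : 0 < s) (ht : 0 < t) (huv : (s:ℤ) * u + (t:ℤ) * v = 1) (n : ℤ) :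
    n ∈ UpSet s t x ↔ 1 ≤ aa s t v x n := by
  constructor
  · rintro ⟨a₀, b₀, ha₀, hb₀, hn⟩
    have h1 := saa (x := x) huv n
    have he : (s:ℤ) * ((a₀:ℤ) - aa s t v x n) = (t:ℤ) * (bb s v x n - b₀) := by
      linear_combination -hn - h1
    have hd : (s:ℤ) ∣ (bb s v x n - b₀) := cop_dvd huv ⟨_, he.symm⟩
    obtain ⟨k, hk⟩ := hd
    have hs' : (0:ℤ) < s := by exact_mod_cast hs
    have ht' : (0:ℤ) < t := by exact_mod_cast ht
    have hk0 : k ≤ 0 := by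
      have hb1 := bb_le (v := v) (x := x) hs n
      have hb0' : (0:ℤ) < b₀ := by exact_mod_cast hb₀
      nlinarith
    have ha : (a₀:ℤ) - aa s t v x n = t * k := by
      have h2 : (s:ℤ) * ((a₀:ℤ) - aa s t v x n) = (s:ℤ) * ((t:ℤ) * k) := by
        rw [he, hk]; ring
      exact mul_left_cancel₀ hs'.ne' h2
    have ha₀' : (1:ℤ) ≤ a₀ := by exact_mod_cast ha₀
    nlinarith
  · intro h
    have h1 := saa (x := x) huv n
    have hb1 := bb_pos (v := v) (x := x) hs n
    refine ⟨(aa s t v x n).toNat, (bb s v x n).toNat, by omega, by omega, ?_⟩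
    have e1 : ((aa s t v x n).toNat : ℤ) = aa s t v x n := by omega
    have e2 : ((bb s v x n).toNat : ℤ) = bb s v x n := by omega
    rw [e1, e2]
    linear_combination -h1

lemma mem_low_iff (hs : 0 < s) (ht : 0 < t) (huv : (s:ℤ) * u + (t:ℤ) * v = 1) (n : ℤ) :
    n ∈ LowSet s t x ↔ aa s t v x n ≤ -(t:ℤ) := by
  constructor
  · rintro ⟨a₀, b₀, hn⟩
    have h1 := saa (x := x) huv n
    have he : (s:ℤ) * (-(a₀:ℤ) - aa s t v x n) = (t:ℤ) * (bb s v x n + b₀) := by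
      linear_combination -hn - h1
    have hd : (s:ℤ) ∣ (bb s v x n + b₀) := cop_dvd huv ⟨_, he.symm⟩
    obtain ⟨k, hk⟩ := hd
    have hs' : (0:ℤ) < s := by exact_mod_cast hs
    have ht' : (0:ℤ) < t := by exact_mod_cast ht
    have hb0' : (0:ℤ) ≤ b₀ := by positivity
    have ha0' : (0:ℤ) ≤ a₀ := by positivity
    have hk1 : 1 ≤ k := by
      have hb1 := bb_pos (v := v) (x := x) hs n
      nlinarith
    have ha : -(a₀:ℤ) - aa s t v x n = t * k := by
      have h2 : (s:ℤ) * (-(a₀:ℤ) - aa s t v x n) = (s:ℤ) * ((t:ℤ) * k) := by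
        rw [he, hk]; ring
      exact mul_left_cancel₀ hs'.ne' h2
    nlinarith
  · intro h
    have h1 := saa (x := x) huv n
    have hb2 := bb_le (v := v) (x := x) hs n
    refine ⟨(-(t:ℤ) - aa s t v x n).toNat, ((s:ℤ) - bb s v x n).toNat, ?_⟩
    have e1 : (((-(t:ℤ) - aa s t v x n).toNat) : ℤ) = -(t:ℤ) - aa s t v x n := by omega
    have e2 : ((((s:ℤ) - bb s v x n).toNat) : ℤ) = (s:ℤ) - bb s v x n := by omega
    rw [e1, e2]
    linear_combination -h1

lemma up_iff_qq (hs : 0 < s) (ht : 0 < t) (huv : (s:ℤ) * u + (t:ℤ) * v = 1) (n : ℤ) :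
    n ∈ UpSet s t x ↔ 1 ≤ qq s t v x n := by
  rw [mem_up_iff (x := x) hs ht huv n]
  have hr := cc_range (s := s) (v := v) (x := x) ht n
  have hc : aa s t v x n = t * qq s t v x n + cc s t v x n := by rw [cc]; ring
  have ht' : (0:ℤ) < t := by exact_mod_cast ht
  constructor
  · intro h
    by_contra hq
    push_neg at hq
    have hq0 : qq s t v x n ≤ 0 := by omega
    nlinarith
  · intro h
    nlinarith

lemma low_iff_qq (hs : 0 < s) (ht : 0 < t) (huv : (s:ℤ) * u + (t:ℤ) * v = 1) (n : ℤ) :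
    n ∈ LowSet s t x ↔ qq s t v x n ≤ -1 := by
  rw [mem_low_iff (x := x) hs ht huv n]
  have hr := cc_range (s := s) (v := v) (x := x) ht n
  have hc : aa s t v x n = t * qq s t v x n + cc s t v x n := by rw [cc]; ring
  have ht' : (0:ℤ) < t := by exact_mod_cast ht
  constructor
  · intro h
    by_contra hq
    push_neg at hq
    have hq0 : 0 ≤ qq s t v x n := by omega
    nlinarith
  · intro h
    nlinarith

end Coord

/-! ### summation machinery -/

/-- the size difference equals the signed sum over the beta-set differences -/
lemma size_diff (l m : SeqPartition) :
    (m.size : ℤ) - (l.size : ℤ)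
      = (∑ n ∈ (bdiff_finite m l).toFinset, n) - (∑ n ∈ (bdiff_finite l m).toFinset, n) := by
  obtain ⟨Nl, hNl⟩ := exists_bound l
  obtain ⟨Nm, hNm⟩ := exists_bound m
  set N := max Nl Nm with hN
  have hNl' : ∀ r, N ≤ r → l.parts r = 0 := fun r hr => hNl r (le_trans (le_max_left _ _) hr)
  have hNm' : ∀ r, N ≤ r → m.parts r = 0 := fun r hr => hNm r (le_trans (le_max_right _ _) hr)
  have hml : (bdiff_finite m l).toFinset = betaF m N \ betaF l N := by
    apply Finset.coe_injective
    rw [Set.Finite.coe_toFinset, Finset.coe_sdiff, betaF_coe m hNm', betaF_coe l hNl']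
    ext n
    constructor
    · rintro ⟨h1, h2⟩
      have hn : -(N:ℤ) ≤ n := by
        by_contra hc
        push_neg at hc
        exact h2 (mem_beta_of_le l hNl' hc)
      exact ⟨⟨h1, hn⟩, fun hc => h2 hc.1⟩
    · rintro ⟨⟨h1, hn⟩, h2⟩
      exact ⟨h1, fun hc => h2 ⟨hc, hn⟩⟩
  have hlm : (bdiff_finite l m).toFinset = betaF l N \ betaF m N := by
    apply Finset.coe_injective
    rw [Set.Finite.coe_toFinset, Finset.coe_sdiff, betaF_coe m hNm', betaF_coe l hNl']
    ext n
    constructor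
    · rintro ⟨h1, h2⟩
      have hn : -(N:ℤ) ≤ n := by
        by_contra hc
        push_neg at hc
        exact h2 (mem_beta_of_le m hNm' hc)
      exact ⟨⟨h1, hn⟩, fun hc => h2 hc.1⟩
    · rintro ⟨⟨h1, hn⟩, h2⟩
      exact ⟨h1, fun hc => h2 ⟨hc, hn⟩⟩
  have e1 := sum_betaF m hNm'
  have e2 := sum_betaF l hNl'
  have h1 : (∑ n ∈ betaF m N ∩ betaF l N, n) + (∑ n ∈ betaF m N \ betaF l N, n)
      = ∑ n ∈ betaF m N, n := Finset.sum_inter_add_sum_sdiff _ _ _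
  have h2 : (∑ n ∈ betaF l N ∩ betaF m N, n) + (∑ n ∈ betaF l N \ betaF m N, n)
      = ∑ n ∈ betaF l N, n := Finset.sum_inter_add_sum_sdiff _ _ _
  have hcomm : betaF m N ∩ betaF l N = betaF l N ∩ betaF m N := Finset.inter_comm _ _
  rw [hml, hlm]
  rw [hcomm] at h1
  omega

/-- if all class counts agree mod `d`, sums of class functions agree -/
lemma sum_eq_of_cdiff {d : ℕ} (l m : SeqPartition) (hc : ∀ i, cdiff d i l m = 0) (g : ℤ → ℤ) :
    (∑ n ∈ (bdiff_finite l m).toFinset, g (n % (d:ℤ)))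
      = ∑ n ∈ (bdiff_finite m l).toFinset, g (n % (d:ℤ)) := by
  classical
  set P := (bdiff_finite l m).toFinset with hP
  set Q := (bdiff_finite m l).toFinset with hQ
  set T := (P ∪ Q).image (fun n => n % (d:ℤ)) with hT
  have hmapsP : ∀ n ∈ P, n % (d:ℤ) ∈ T :=
    fun n hn => Finset.mem_image_of_mem _ (Finset.mem_union_left _ hn)
  have hmapsQ : ∀ n ∈ Q, n % (d:ℤ) ∈ T :=
    fun n hn => Finset.mem_image_of_mem _ (Finset.mem_union_right _ hn)
  rw [← Finset.sum_fiberwise_of_maps_to hmapsP, ← Finset.sum_fiberwise_of_maps_to hmapsQ]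
  apply Finset.sum_congr rfl
  intro i _
  have hcard : (P.filter (fun n => n % (d:ℤ) = i)).card
      = (Q.filter (fun n => n % (d:ℤ) = i)).card := by
    have hc' := hc i
    rw [cdiff] at hc'
    have eP : ((l.betaSet \ m.betaSet) ∩ {n | n % (d:ℤ) = i}).ncard
        = (P.filter (fun n => n % (d:ℤ) = i)).card := by
      rw [← Set.ncard_coe_finset]
      congr 1
      ext n
      simp only [Finset.coe_filter, Set.mem_setOf_eq, hP, Set.Finite.mem_toFinset,
        Set.mem_inter_iff, Set.mem_diff]
    have eQ : ((m.betaSet \ l.betaSet) ∩ {n | n % (d:ℤ) = i}).ncard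
        = (Q.filter (fun n => n % (d:ℤ) = i)).card := by
      rw [← Set.ncard_coe_finset]
      congr 1
      ext n
      simp only [Finset.coe_filter, Set.mem_setOf_eq, hQ, Set.Finite.mem_toFinset,
        Set.mem_inter_iff, Set.mem_diff]
    omega
  have eP' : (∑ n ∈ P.filter (fun n => n % (d:ℤ) = i), g (n % (d:ℤ)))
      = (P.filter (fun n => n % (d:ℤ) = i)).card • g i := by
    rw [← Finset.sum_const]
    apply Finset.sum_congr rfl
    intro n hn
    rw [(Finset.mem_filter.mp hn).2]
  have eQ' : (∑ n ∈ Q.filter (fun n => n % (d:ℤ) = i), g (n % (d:ℤ)))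
      = (Q.filter (fun n => n % (d:ℤ) = i)).card • g i := by
    rw [← Finset.sum_const]
    apply Finset.sum_congr rfl
    intro n hn
    rw [(Finset.mem_filter.mp hn).2]
  rw [eP', eQ', hcard]

end Stmt10Aux

/-- a partition with a pinch-point is minimal among partitions with
the same `s`-core and `t`-core, with equality of sizes iff the pinch-point is shared. -/
theorem stmt10 (s t : ℕ) (hs : 1 < s) (ht : 1 < t) (hst : Nat.Coprime s t)
    (x : ℤ) (l m σ τ : SeqPartition)
    (hls : SeqPartition.HasCore s l σ) (hms : SeqPartition.HasCore s m σ)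
    (hlt : SeqPartition.HasCore t l τ) (hmt : SeqPartition.HasCore t m τ)
    (hx : PinchPoint s t x l) :
    l.size ≤ m.size ∧ (m.size = l.size ↔ PinchPoint s t x m) := by
  classical
  open Stmt10Aux in
  have hs0 : 0 < s := by omega
  have ht0 : 0 < t := by omega
  -- Bezout coefficients
  have h2 : Int.gcd (s:ℤ) (t:ℤ) = 1 := by
    rw [Int.gcd_natCast_natCast]; exact hst
  have h1 := Int.gcd_eq_gcd_ab (s:ℤ) (t:ℤ)
  rw [h2] at h1
  set u := Int.gcdA (s:ℤ) (t:ℤ) with hu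
  set v := Int.gcdB (s:ℤ) (t:ℤ) with hv
  have huv : (s:ℤ) * u + (t:ℤ) * v = 1 := by exact_mod_cast h1.symm
  set P := (Stmt10Aux.bdiff_finite m l).toFinset with hPdef
  set Q := (Stmt10Aux.bdiff_finite l m).toFinset with hQdef
  have hmemP : ∀ n : ℤ, n ∈ P ↔ (n ∈ m.betaSet ∧ n ∉ l.betaSet) := by
    intro n
    rw [hPdef, Set.Finite.mem_toFinset, Set.mem_diff]
  have hmemQ : ∀ n : ℤ, n ∈ Q ↔ (n ∈ l.betaSet ∧ n ∉ m.betaSet) := by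
    intro n
    rw [hQdef, Set.Finite.mem_toFinset, Set.mem_diff]
  have hcs : ∀ i, Stmt10Aux.cdiff s i l m = 0 :=
    fun i => Stmt10Aux.cdiff_of_hasCore hs0 i hls hms
  have hct : ∀ i, Stmt10Aux.cdiff t i l m = 0 :=
    fun i => Stmt10Aux.cdiff_of_hasCore ht0 i hlt hmt
  -- decompose the sum of elements via coordinates
  have hsum : ∀ (F : Finset ℤ), (∑ n ∈ F, n)
      = (s:ℤ)*t*(∑ n ∈ F, Stmt10Aux.qq s t v x n) + s*(∑ n ∈ F, Stmt10Aux.cc s t v x n)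
        + t*(∑ n ∈ F, Stmt10Aux.bb s v x n) + (F.card : ℤ) * x := by
    intro F
    calc (∑ n ∈ F, n)
        = ∑ n ∈ F, ((s:ℤ)*t*Stmt10Aux.qq s t v x n + s*Stmt10Aux.cc s t v x n
            + t*Stmt10Aux.bb s v x n + x) :=
          Finset.sum_congr rfl (fun n _ => (Stmt10Aux.coord_id (x := x) huv n).symm)
      _ = (s:ℤ)*t*(∑ n ∈ F, Stmt10Aux.qq s t v x n) + s*(∑ n ∈ F, Stmt10Aux.cc s t v x n)
            + t*(∑ n ∈ F, Stmt10Aux.bb s v x n) + (F.card : ℤ) * x := by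
          rw [Finset.sum_add_distrib, Finset.sum_add_distrib, Finset.sum_add_distrib,
            Finset.sum_const, ← Finset.mul_sum, ← Finset.mul_sum, ← Finset.mul_sum,
            nsmul_eq_mul]
  -- class-constant sums agree
  have hcc : (∑ n ∈ Q, Stmt10Aux.cc s t v x n) = ∑ n ∈ P, Stmt10Aux.cc s t v x n := by
    have he : ∀ n : ℤ, Stmt10Aux.cc s t v x (n % (t:ℤ)) = Stmt10Aux.cc s t v x n :=
      fun n => Stmt10Aux.cc_congr ht0 huv (Int.emod_emod_of_dvd _ dvd_rfl)
    have h := Stmt10Aux.sum_eq_of_cdiff l m hct (fun i => Stmt10Aux.cc s t v x i)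
    calc (∑ n ∈ Q, Stmt10Aux.cc s t v x n)
        = ∑ n ∈ Q, Stmt10Aux.cc s t v x (n % (t:ℤ)) :=
          Finset.sum_congr rfl (fun n _ => (he n).symm)
      _ = ∑ n ∈ P, Stmt10Aux.cc s t v x (n % (t:ℤ)) := h
      _ = ∑ n ∈ P, Stmt10Aux.cc s t v x n := Finset.sum_congr rfl (fun n _ => he n)
  have hbb : (∑ n ∈ Q, Stmt10Aux.bb s v x n) = ∑ n ∈ P, Stmt10Aux.bb s v x n := by
    have he : ∀ n : ℤ, Stmt10Aux.bb s v x (n % (s:ℤ)) = Stmt10Aux.bb s v x n :=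
      fun n => Stmt10Aux.bb_congr (Int.emod_emod_of_dvd _ dvd_rfl)
    have h := Stmt10Aux.sum_eq_of_cdiff l m hcs (fun i => Stmt10Aux.bb s v x i)
    calc (∑ n ∈ Q, Stmt10Aux.bb s v x n)
        = ∑ n ∈ Q, Stmt10Aux.bb s v x (n % (s:ℤ)) :=
          Finset.sum_congr rfl (fun n _ => (he n).symm)
      _ = ∑ n ∈ P, Stmt10Aux.bb s v x (n % (s:ℤ)) := h
      _ = ∑ n ∈ P, Stmt10Aux.bb s v x n := Finset.sum_congr rfl (fun n _ => he n)
  have hcard : (Q.card : ℤ) = (P.card : ℤ) := by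
    have h := Stmt10Aux.sum_eq_of_cdiff l m hcs (fun _ => (1:ℤ))
    simpa using h
  -- the key identity
  have hkey : (m.size : ℤ) - (l.size : ℤ)
      = (s:ℤ)*t*((∑ n ∈ P, Stmt10Aux.qq s t v x n) - ∑ n ∈ Q, Stmt10Aux.qq s t v x n) := by
    rw [Stmt10Aux.size_diff l m, ← hPdef, ← hQdef, hsum P, hsum Q, hcc, hbb, hcard]
    ring
  -- sign facts
  have hPge : ∀ n ∈ P, 0 ≤ Stmt10Aux.qq s t v x n := by
    intro n hn
    obtain ⟨hnm, hnl⟩ := (hmemP n).mp hn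
    by_contra hc
    push_neg at hc
    exact hnl (hx.1 ((Stmt10Aux.low_iff_qq hs0 ht0 huv n).mpr (by omega)))
  have hQle : ∀ n ∈ Q, Stmt10Aux.qq s t v x n ≤ 0 := by
    intro n hn
    obtain ⟨hnl, hnm⟩ := (hmemQ n).mp hn
    by_contra hc
    push_neg at hc
    have hnU : n ∈ UpSet s t x := (Stmt10Aux.up_iff_qq hs0 ht0 huv n).mpr (by omega)
    exact Set.eq_empty_iff_forall_notMem.mp hx.2 n ⟨hnl, hnU⟩
  have hPsum : 0 ≤ ∑ n ∈ P, Stmt10Aux.qq s t v x n := Finset.sum_nonneg hPge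
  have hQsum : (∑ n ∈ Q, Stmt10Aux.qq s t v x n) ≤ 0 := Finset.sum_nonpos hQle
  have hst' : (0:ℤ) < (s:ℤ)*t := by positivity
  constructor
  · have hge : (0:ℤ) ≤ (m.size : ℤ) - l.size := by
      rw [hkey]
      apply mul_nonneg (le_of_lt hst')
      omega
    have : (l.size:ℤ) ≤ (m.size:ℤ) := by omega
    exact_mod_cast this
  · constructor
    · intro heq
      have hz : (s:ℤ)*t*((∑ n ∈ P, Stmt10Aux.qq s t v x n)
          - ∑ n ∈ Q, Stmt10Aux.qq s t v x n) = 0 := by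
        rw [← hkey, heq]
        ring
      have hSz : (∑ n ∈ P, Stmt10Aux.qq s t v x n) - (∑ n ∈ Q, Stmt10Aux.qq s t v x n) = 0 := by
        rcases mul_eq_zero.mp hz with h | h
        · exact absurd h (by positivity)
        · exact h
      have hP0 : ∀ n ∈ P, Stmt10Aux.qq s t v x n = 0 :=
        (Finset.sum_eq_zero_iff_of_nonneg hPge).mp (by omega)
      have hQ0 : ∀ n ∈ Q, Stmt10Aux.qq s t v x n = 0 :=
        (Finset.sum_eq_zero_iff_of_nonpos hQle).mp (by omega)
      constructor
      · intro n hnL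
        by_contra hnm
        have hq := (Stmt10Aux.low_iff_qq hs0 ht0 huv n).mp hnL
        have hnQ : n ∈ Q := (hmemQ n).mpr ⟨hx.1 hnL, hnm⟩
        have := hQ0 n hnQ
        omega
      · rw [Set.eq_empty_iff_forall_notMem]
        rintro n ⟨hnm, hnU⟩
        have hq := (Stmt10Aux.up_iff_qq hs0 ht0 huv n).mp hnU
        by_cases hnl : n ∈ l.betaSet
        · exact Set.eq_empty_iff_forall_notMem.mp hx.2 n ⟨hnl, hnU⟩
        · have hnP : n ∈ P := (hmemP n).mpr ⟨hnm, hnl⟩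
          have := hP0 n hnP
          omega
    · intro hpm
      have hP0 : ∀ n ∈ P, Stmt10Aux.qq s t v x n = 0 := by
        intro n hn
        obtain ⟨hnm, hnl⟩ := (hmemP n).mp hn
        have h1 : ¬ (1 ≤ Stmt10Aux.qq s t v x n) := by
          intro hq
          exact Set.eq_empty_iff_forall_notMem.mp hpm.2 n
            ⟨hnm, (Stmt10Aux.up_iff_qq hs0 ht0 huv n).mpr hq⟩
        have h2 : ¬ (Stmt10Aux.qq s t v x n ≤ -1) := by
          intro hq
          exact hnl (hx.1 ((Stmt10Aux.low_iff_qq hs0 ht0 huv n).mpr hq))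
        omega
      have hQ0 : ∀ n ∈ Q, Stmt10Aux.qq s t v x n = 0 := by
        intro n hn
        obtain ⟨hnl, hnm⟩ := (hmemQ n).mp hn
        have h1 : ¬ (1 ≤ Stmt10Aux.qq s t v x n) := by
          intro hq
          exact Set.eq_empty_iff_forall_notMem.mp hx.2 n
            ⟨hnl, (Stmt10Aux.up_iff_qq hs0 ht0 huv n).mpr hq⟩
        have h2 : ¬ (Stmt10Aux.qq s t v x n ≤ -1) := by
          intro hq
          exact hnm (hpm.1 ((Stmt10Aux.low_iff_qq hs0 ht0 huv n).mpr hq))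
        omega
      have hz : (m.size : ℤ) - (l.size : ℤ) = 0 := by
        rw [hkey, Finset.sum_eq_zero hP0, Finset.sum_eq_zero hQ0]
        ring
      have : (m.size:ℤ) = (l.size:ℤ) := by omega
      exact_mod_cast this
end
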